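/- arXiv:2012.08875 — 7 statements merged into one kernel-verified Lean document; each statement's English description precedes it below -/
import Mathlib

section
/- For all integers k ≥ 3 and m ≥ k+1, there exists a 2-edge-colouring of the complete k-graph K_n^{(k)} on n = k(m+1)+1 vertices whose vertex set admits no partition into two sets V_1 and V_2 such that V_1 is the vertex set of a red tight cycle (possibly degenerate) and V_2 is the vertex set of a blue tight cycle (possibly degenerate). -/
open Finset

section TightCycleAux

set_option linter.unusedSectionVars false
set_option linter.unusedVariables false

def wsum (g : ℕ → ℕ) (k i : ℕ) : ℕ := ∑ j ∈ Finset.range k, g (i + j)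

def window {V : Type*} [DecidableEq V] (f : ℕ → V) (k i : ℕ) : Finset V :=
  (Finset.range k).image (fun j => f (i + j))



lemma wsum_step (g : ℕ → ℕ) (k i : ℕ) :
    wsum g k (i + 1) + g i = wsum g k i + g (i + k) := by
  have h1 : ∑ j ∈ range (k+1), g (i + j) = wsum g k i + g (i + k) := by
    rw [Finset.sum_range_succ]; rfl
  have h2 : ∑ j ∈ range (k+1), g (i + j) = g i + wsum g k (i+1) := by
    rw [Finset.sum_range_succ']
    simp only [wsum]
    rw [Nat.add_comm]
    congr 1
    apply Finset.sum_congr rfl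
    intro j _
    congr 1
    omega
  omega

lemma sum_shift (g : ℕ → ℕ) (w : ℕ) (hper : ∀ i, g (i + w) = g i) (j : ℕ) :
    ∑ i ∈ range w, g (i + j) = ∑ i ∈ range w, g i := by
  induction j with
  | zero => simp
  | succ j ih =>
    have key : ∑ i ∈ range w, g (i + (j+1)) + g j = ∑ i ∈ range w, g (i + j) + g (j + w) := by
      have h1 : ∑ i ∈ range (w+1), g (i + j) = ∑ i ∈ range w, g (i + j) + g (w + j) := by
        rw [Finset.sum_range_succ]
      have h2 : ∑ i ∈ range (w+1), g (i + j) = g j + ∑ i ∈ range w, g (i + (j+1)) := by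
        rw [Finset.sum_range_succ']
        rw [Nat.add_comm]
        simp only [Nat.zero_add]
        congr 1
        apply Finset.sum_congr rfl
        intro i _
        congr 1
        omega
      have h3 : g (w + j) = g (j + w) := by rw [Nat.add_comm]
      omega
    rw [hper j] at key
    omega

lemma sum_wsum (g : ℕ → ℕ) (k w : ℕ) (hper : ∀ i, g (i + w) = g i) :
    ∑ i ∈ range w, wsum g k i = k * ∑ i ∈ range w, g i := by
  simp only [wsum]
  rw [Finset.sum_comm]
  rw [Finset.sum_congr rfl (fun j _ => sum_shift g w hper j)]
  simp [Finset.sum_const, Nat.smul_one_eq_cast]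

lemma dich_low (g : ℕ → ℕ) (k : ℕ) (hg : ∀ i, g i ≤ 1) (s R : ℕ)
    (h1 : ∀ r, r ≤ R → wsum g k (s + r) ≠ 1) (h0 : wsum g k s = 0) :
    ∀ r, r ≤ R → wsum g k (s + r) = 0 := by
  intro r
  induction r with
  | zero => intro _; simpa using h0
  | succ r ih =>
    intro hr
    have hprev := ih (by omega)
    have hst := wsum_step g k (s + r)
    have hgr := hg (s + r)
    have hgk := hg (s + r + k)
    have := h1 (r+1) hr
    have hrw : s + r + 1 = s + (r + 1) := by omega
    rw [hrw] at hst
    omega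

lemma dich_high (g : ℕ → ℕ) (k : ℕ) (hg : ∀ i, g i ≤ 1) (s R : ℕ)
    (h1 : ∀ r, r ≤ R → wsum g k (s + r) ≠ 1) (h0 : 2 ≤ wsum g k s) :
    ∀ r, r ≤ R → 2 ≤ wsum g k (s + r) := by
  intro r
  induction r with
  | zero => intro _; simpa using h0
  | succ r ih =>
    intro hr
    have hprev := ih (by omega)
    have hst := wsum_step g k (s + r)
    have hgr := hg (s + r)
    have hgk := hg (s + r + k)
    have := h1 (r+1) hr
    have hrw : s + r + 1 = s + (r + 1) := by omega
    rw [hrw] at hst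
    omega

section Cycle

variable {V : Type*} [DecidableEq V] {W : Finset V} {f : ℕ → V} {k : ℕ}

variable (hper : ∀ i, f (i + W.card) = f i)
  (hmem : ∀ i, f i ∈ W)
  (hinj : ∀ i j, i < W.card → j < W.card → f i = f j → i = j)
  (hkw : k ≤ W.card)

include hper in
lemma f_add_mul (i q : ℕ) : f (i + q * W.card) = f i := by
  induction q with
  | zero => simp
  | succ q ih =>
    have : i + (q+1) * W.card = (i + q * W.card) + W.card := by ring
    rw [this, hper, ih]

include hper in
lemma f_mod (i : ℕ) (hw : 0 < W.card) : f i = f (i % W.card) := by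
  conv_lhs => rw [← Nat.mod_add_div i W.card]
  rw [show i % W.card + W.card * (i / W.card) = i % W.card + (i / W.card) * W.card by ring]
  exact f_add_mul hper _ _

include hper hinj in
lemma idx_eq (hw : 0 < W.card) {i j : ℕ} (h : f i = f j) : i % W.card = j % W.card := by
  apply hinj _ _ (Nat.mod_lt _ hw) (Nat.mod_lt _ hw)
  rw [← f_mod hper i hw, ← f_mod hper j hw, h]

include hper hinj in
lemma idx_cancel (hw : 0 < W.card) {i p q : ℕ} (h : f (i + p) = f (i + q)) :
    p % W.card = q % W.card := by
  have h1 : Nat.ModEq W.card (i + p) (i + q) := idx_eq hper hinj hw h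
  exact Nat.ModEq.add_left_cancel' i h1

include hper hinj hkw in
lemma window_card (i : ℕ) : (window f k i).card = k := by
  rw [window, Finset.card_image_of_injOn, Finset.card_range]
  intro j1 h1 j2 h2 heq
  simp only [Finset.coe_range, Set.mem_Iio] at h1 h2
  have hw : 0 < W.card := by omega
  have := idx_cancel hper hinj hw heq
  rw [Nat.mod_eq_of_lt (by omega), Nat.mod_eq_of_lt (by omega)] at this
  exact this

include hmem in
lemma window_subset (i : ℕ) : window f k i ⊆ W := by
  intro v hv
  rw [window, Finset.mem_image] at hv
  obtain ⟨j, _, rfl⟩ := hv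
  exact hmem _

lemma mem_window {v : V} {i : ℕ} : v ∈ window f k i ↔ ∃ j < k, f (i + j) = v := by
  simp [window]

include hper hinj hkw in
lemma window_inter_card (hk0 : 0 < k) (A : Finset V) (i : ℕ) :
    ((window f k i) ∩ A).card = wsum (fun t => if f t ∈ A then 1 else 0) k i := by
  have hw : 0 < W.card := by omega
  have hrw : (window f k i) ∩ A =
      ((Finset.range k).filter (fun j => f (i + j) ∈ A)).image (fun j => f (i + j)) := by
    ext v
    simp only [window, Finset.mem_inter, Finset.mem_image, Finset.mem_filter]
    constructor
    · rintro ⟨⟨j, hj, rfl⟩, hv⟩; exact ⟨j, ⟨hj, hv⟩, rfl⟩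
    · rintro ⟨j, ⟨hj, hv⟩, rfl⟩; exact ⟨⟨j, hj, rfl⟩, hv⟩
  rw [hrw, Finset.card_image_of_injOn, Finset.card_filter]
  · rfl
  · intro j1 h1 j2 h2 heq
    simp only [Finset.coe_filter, Set.mem_setOf_eq, Finset.mem_range] at h1 h2
    have := idx_cancel hper hinj hw heq
    rw [Nat.mod_eq_of_lt (by omega), Nat.mod_eq_of_lt (by omega)] at this
    exact this

include hper hinj hmem in
lemma inter_card_eq_sum (A : Finset V) (hw : 0 < W.card) :
    (W ∩ A).card = ∑ t ∈ range W.card, (if f t ∈ A then 1 else 0) := by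
  have hsub : (Finset.range W.card).image f ⊆ W := by
    intro v hv
    rw [Finset.mem_image] at hv
    obtain ⟨j, _, rfl⟩ := hv
    exact hmem _
  have hinjOn : Set.InjOn f (Finset.range W.card) := by
    intro j1 h1 j2 h2 heq
    simp only [Finset.coe_range, Set.mem_Iio] at h1 h2
    exact hinj _ _ h1 h2 heq
  have hcard : ((Finset.range W.card).image f).card = W.card := by
    rw [Finset.card_image_of_injOn hinjOn, Finset.card_range]
  have hWim : W = (Finset.range W.card).image f :=
    (Finset.eq_of_subset_of_card_le hsub (by omega)).symm
  have hmemW : ∀ v, v ∈ W ↔ ∃ j, j < W.card ∧ f j = v := by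
    intro v
    constructor
    · intro hv
      rw [hWim, Finset.mem_image] at hv
      obtain ⟨j, hj, rfl⟩ := hv
      exact ⟨j, Finset.mem_range.mp hj, rfl⟩
    · rintro ⟨j, hj, rfl⟩
      exact hmem _
  have hrw : W ∩ A = ((Finset.range W.card).filter (fun t => f t ∈ A)).image f := by
    ext v
    simp only [Finset.mem_inter, Finset.mem_image, Finset.mem_filter, Finset.mem_range]
    constructor
    · rintro ⟨hvW, hv⟩
      obtain ⟨j, hj, rfl⟩ := (hmemW v).mp hvW
      exact ⟨j, ⟨hj, hv⟩, rfl⟩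
    · rintro ⟨j, ⟨hj, hv⟩, rfl⟩
      exact ⟨hmem _, hv⟩
  rw [hrw, Finset.card_image_of_injOn (hinjOn.mono (by intro t ht; have := Finset.mem_filter.mp (Finset.mem_coe.mp ht); simpa using this.1)), Finset.card_filter]


variable (hsurj : ∀ v ∈ W, ∃ i, f i = v)

section Special

variable (x : V) (A : Finset V)

include hper hmem hinj hkw hsurj in
lemma blue_struct (hk0 : 0 < k) (hxA : x ∉ A)
    (hblue : ∀ i, ((window f k i) ∩ A).card = (if x ∈ window f k i then 2 else 1)) :
    (x ∉ W ∧ k * (W ∩ A).card = W.card) ∨ (x ∈ W ∧ W.card = k) := by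
  have hw : 0 < W.card := by omega
  set g : ℕ → ℕ := fun t => if f t ∈ A then 1 else 0 with hg_def
  have hgper : ∀ i, g (i + W.card) = g i := by
    intro i; simp only [hg_def, hper]
  by_cases hx : x ∈ W
  · right
    refine ⟨hx, ?_⟩
    by_contra hwk
    have hw1 : k + 1 ≤ W.card := by omega
    obtain ⟨i0', hi0'⟩ := hsurj x hx
    set i0 := i0' % W.card with hi0_def
    have hfi0 : f i0 = x := by rw [hi0_def, ← f_mod hper _ hw]; exact hi0'
    have hxin : x ∈ window f k i0 := by
      rw [mem_window]
      exact ⟨0, hk0, by simpa using hfi0⟩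
    have hv2 : wsum g k i0 = 2 := by
      rw [← window_inter_card hper hinj hkw hk0 A i0]
      rw [hblue i0, if_pos hxin]
    have hxout : x ∉ window f k (i0 + 1) := by
      intro hmem'
      obtain ⟨j, hj, hfj⟩ := mem_window.mp hmem'
      have heq : f (i0 + (1 + j)) = f (i0 + 0) := by
        rw [show i0 + (1 + j) = i0 + 1 + j by omega, hfj, Nat.add_zero, hfi0]
      have hc := idx_cancel hper hinj hw heq
      rw [Nat.mod_eq_of_lt (by omega), Nat.mod_eq_of_lt (by omega)] at hc
      omega
    have hv1 : wsum g k (i0 + 1) = 1 := by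
      rw [← window_inter_card hper hinj hkw hk0 A (i0+1)]
      rw [hblue (i0+1), if_neg hxout]
    have hstep := wsum_step g k i0
    have hgi0 : g i0 = 0 := by simp [hg_def, hfi0, hxA]
    have hgk : g (i0 + k) ≤ 1 := by simp only [hg_def]; split <;> omega
    omega
  · left
    refine ⟨hx, ?_⟩
    have hall1 : ∀ i, wsum g k i = 1 := by
      intro i
      rw [← window_inter_card hper hinj hkw hk0 A i]
      rw [hblue i, if_neg (fun hc => hx (window_subset hmem i hc))]
    have htot := sum_wsum g k W.card hgper
    rw [Finset.sum_congr rfl (fun i _ => hall1 i)] at htot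
    rw [← inter_card_eq_sum hper hmem hinj A hw] at htot
    simpa using htot.symm

include hper hmem hinj hkw hsurj in
lemma red_struct (hk0 : 0 < k) (hxA : x ∉ A)
    (hred : ∀ i, ((window f k i) ∩ A).card ≠ (if x ∈ window f k i then 2 else 1)) :
    (W ∩ A).card = 0 ∨ 2 * ((W.card - 1) / k) ≤ (W ∩ A).card := by
  have hw : 0 < W.card := by omega
  set g : ℕ → ℕ := fun t => if f t ∈ A then 1 else 0 with hg_def
  have hgper : ∀ i, g (i + W.card) = g i := by
    intro i; simp only [hg_def, hper]
  have hgle : ∀ i, g i ≤ 1 := by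
    intro i; simp only [hg_def]; split <;> omega
  have hwic : ∀ i, ((window f k i) ∩ A).card = wsum g k i :=
    fun i => window_inter_card hper hinj hkw hk0 A i
  by_cases hx : x ∈ W
  · by_cases hwk : W.card = k
    · right
      rw [hwk, Nat.div_eq_of_lt (by omega)]
      omega
    · -- W.card ≥ k + 1, x ∈ W
      have hw1 : k + 1 ≤ W.card := by omega
      obtain ⟨i0', hi0'⟩ := hsurj x hx
      set i0 := i0' % W.card with hi0_def
      have hi0lt : i0 < W.card := Nat.mod_lt _ hw
      have hfi0 : f i0 = x := by rw [hi0_def, ← f_mod hper _ hw]; exact hi0'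
      set R := W.card - k - 1 with hR_def
      have harcnx : ∀ r, r ≤ R → x ∉ window f k (i0 + 1 + r) := by
        intro r hr hmem'
        obtain ⟨j, hj, hfj⟩ := mem_window.mp hmem'
        have heq : f (i0 + (1 + r + j)) = f (i0 + 0) := by
          rw [show i0 + (1 + r + j) = i0 + 1 + r + j by omega, hfj, Nat.add_zero, hfi0]
        have hc := idx_cancel hper hinj hw heq
        rw [Nat.mod_eq_of_lt (by omega), Nat.mod_eq_of_lt (by omega)] at hc
        omega
      have harcne1 : ∀ r, r ≤ R → wsum g k (i0 + 1 + r) ≠ 1 := by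
        intro r hr
        rw [← hwic]
        have := hred (i0 + 1 + r)
        rwa [if_neg (harcnx r hr)] at this
      rcases Nat.lt_or_ge (wsum g k (i0 + 1)) 2 with hlow | hhigh
      · -- LOW case: conclude (W ∩ A).card = 0
        have h0 : wsum g k (i0 + 1) = 0 := by
          have := harcne1 0 (by omega)
          simp only [Nat.add_zero] at this
          omega
        have hall0 : ∀ r, r ≤ R → wsum g k (i0 + 1 + r) = 0 :=
          dich_low g k hgle (i0 + 1) R harcne1 h0
        left
        by_contra hbne
        obtain ⟨v, hv⟩ := Finset.card_pos.mp (Nat.pos_of_ne_zero hbne)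
        obtain ⟨hvW, hvA⟩ := Finset.mem_inter.mp hv
        have hvx : v ≠ x := fun h => hxA (h ▸ hvA)
        obtain ⟨iv', hiv'⟩ := hsurj v hvW
        set iv := iv' % W.card with hiv_def
        have hivlt : iv < W.card := Nat.mod_lt _ hw
        have hfiv : f iv = v := by rw [hiv_def, ← f_mod hper _ hw]; exact hiv'
        set j := (iv + W.card - i0) % W.card with hj_def
        have hjlt : j < W.card := Nat.mod_lt _ hw
        have hfj : f (i0 + j) = v := by
          have h1 : f (i0 + j) = f ((i0 + j) % W.card) := f_mod hper _ hw
          have h2 : (i0 + j) % W.card = iv := by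
            have hq : (i0 + j) % W.card = (i0 + (iv + W.card - i0)) % W.card :=
              Nat.ModEq.add_left i0 (Nat.mod_modEq (iv + W.card - i0) W.card)
            have hq2 : i0 + (iv + W.card - i0) = iv + W.card := by omega
            rw [hq, hq2, Nat.add_mod_right, Nat.mod_eq_of_lt hivlt]
          rw [h1, h2, hfiv]
        have hj0 : j ≠ 0 := by
          intro h
          rw [h, Nat.add_zero, hfi0] at hfj
          exact hvx hfj.symm
        -- select a window containing position i0 + j
        set r : ℕ := if j ≤ k then 0 else j - k with hr_def
        set j' : ℕ := if j ≤ k then j - 1 else k - 1 with hj'_def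
        have hrR : r ≤ R := by
          rw [hr_def]; split <;> omega
        have hj'k : j' < k := by
          rw [hj'_def]; split <;> omega
        have hidx : i0 + 1 + r + j' = i0 + j := by
          rw [hr_def, hj'_def]; split <;> omega
        have hvin : v ∈ window f k (i0 + 1 + r) :=
          mem_window.mpr ⟨j', hj'k, by rw [hidx]; exact hfj⟩
        have hpos : 0 < ((window f k (i0 + 1 + r)) ∩ A).card :=
          Finset.card_pos.mpr ⟨v, Finset.mem_inter.mpr ⟨hvin, hvA⟩⟩
        rw [hwic, hall0 r hrR] at hpos
        omega
      · -- HIGH case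
        have hall2 : ∀ r, r ≤ R → 2 ≤ wsum g k (i0 + 1 + r) :=
          dich_high g k hgle (i0 + 1) R harcne1 hhigh
        right
        set u := (W.card - 1) / k with hu_def
        have huk : u * k ≤ W.card - 1 := Nat.div_mul_le_self _ _
        have hu1 : 1 ≤ u := by
          rw [hu_def]
          rw [Nat.le_div_iff_mul_le hk0]
          omega
        set T := (Finset.range u).biUnion (fun s => (window f k (i0 + 1 + s * k)) ∩ A) with hT_def
        have hTsub : T ⊆ W ∩ A := by
          intro v hv
          rw [hT_def, Finset.mem_biUnion] at hv
          obtain ⟨s, hs, hv⟩ := hv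
          obtain ⟨hv1, hv2⟩ := Finset.mem_inter.mp hv
          exact Finset.mem_inter.mpr ⟨window_subset hmem _ hv1, hv2⟩
        have hdisjT : ∀ s ∈ Finset.range u, ∀ t ∈ Finset.range u, s ≠ t →
            Disjoint ((window f k (i0 + 1 + s * k)) ∩ A) ((window f k (i0 + 1 + t * k)) ∩ A) := by
          intro s hs t ht hst
          rw [Finset.mem_range] at hs ht
          rw [Finset.disjoint_left]
          intro v hv1 hv2
          obtain ⟨j1, hj1, hf1⟩ := mem_window.mp (Finset.mem_inter.mp hv1).1
          obtain ⟨j2, hj2, hf2⟩ := mem_window.mp (Finset.mem_inter.mp hv2).1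
          have heq : f ((i0 + 1) + (s * k + j1)) = f ((i0 + 1) + (t * k + j2)) := by
            rw [show (i0+1) + (s*k+j1) = i0 + 1 + s*k + j1 by omega,
                show (i0+1) + (t*k+j2) = i0 + 1 + t*k + j2 by omega, hf1, hf2]
          have hc := idx_cancel hper hinj hw heq
          have hsb : (s+1) * k ≤ u * k := Nat.mul_le_mul_right _ (by omega)
          have htb : (t+1) * k ≤ u * k := Nat.mul_le_mul_right _ (by omega)
          have hsk : s * k + k = (s+1) * k := by ring
          have htk : t * k + k = (t+1) * k := by ring
          rw [Nat.mod_eq_of_lt (by omega), Nat.mod_eq_of_lt (by omega)] at hc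
          -- now s * k + j1 = t * k + j2 with j1, j2 < k forces s = t
          rcases Nat.lt_trichotomy s t with h | h | h
          · have : (s+1) * k ≤ t * k := Nat.mul_le_mul_right _ (by omega)
            omega
          · exact hst h
          · have : (t+1) * k ≤ s * k := Nat.mul_le_mul_right _ (by omega)
            omega
        have hcardT : T.card = ∑ s ∈ Finset.range u, ((window f k (i0 + 1 + s * k)) ∩ A).card :=
          Finset.card_biUnion hdisjT
        have hlb : ∀ s ∈ Finset.range u, 2 ≤ ((window f k (i0 + 1 + s * k)) ∩ A).card := by
          intro s hs
          rw [Finset.mem_range] at hs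
          rw [hwic]
          apply hall2
          have : (s+1) * k ≤ u * k := Nat.mul_le_mul_right _ (by omega)
          have hsk : s * k + k = (s+1) * k := by ring
          omega
        calc 2 * u = ∑ _s ∈ Finset.range u, 2 := by
              rw [Finset.sum_const, Finset.card_range]; ring
          _ ≤ ∑ s ∈ Finset.range u, ((window f k (i0 + 1 + s * k)) ∩ A).card :=
              Finset.sum_le_sum hlb
          _ = T.card := hcardT.symm
          _ ≤ (W ∩ A).card := Finset.card_le_card hTsub
  · -- x ∉ W
    have hne1 : ∀ i, wsum g k i ≠ 1 := by
      intro i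
      rw [← hwic]
      have := hred i
      rwa [if_neg (fun hc => hx (window_subset hmem i hc))] at this
    have htot := sum_wsum g k W.card hgper
    rw [← inter_card_eq_sum hper hmem hinj A hw] at htot
    rcases Nat.lt_or_ge (wsum g k 0) 2 with hlow | hhigh
    · left
      have h0 : wsum g k 0 = 0 := by have := hne1 0; omega
      have hall0 : ∀ i, wsum g k i = 0 := by
        intro i
        have := dich_low g k hgle 0 i (fun r _ => hne1 (0 + r)) h0 i le_rfl
        simpa using this
      rw [Finset.sum_congr rfl (fun i _ => hall0 i)] at htot
      simp only [Finset.sum_const_zero] at htot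
      rcases Nat.mul_eq_zero.mp htot.symm with h | h
      · omega
      · exact h
    · right
      have hall2 : ∀ i, 2 ≤ wsum g k i := by
        intro i
        have := dich_high g k hgle 0 i (fun r _ => hne1 (0 + r)) hhigh i le_rfl
        simpa using this
      have hsum2 : 2 * W.card ≤ ∑ i ∈ Finset.range W.card, wsum g k i := by
        calc 2 * W.card = ∑ _i ∈ Finset.range W.card, 2 := by
              rw [Finset.sum_const, Finset.card_range]; ring
          _ ≤ _ := Finset.sum_le_sum (fun i _ => hall2 i)
      set u := (W.card - 1) / k with hu_def
      have huk : u * k ≤ W.card - 1 := Nat.div_mul_le_self _ _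
      have hklt : k * (2 * u) < k * (W ∩ A).card := by
        have h1 : k * (2 * u) = 2 * (u * k) := by ring
        have h2 : 2 * (u * k) + 2 ≤ 2 * W.card := by omega
        omega
      exact (Nat.lt_of_mul_lt_mul_left hklt).le

include hper hmem hinj hkw hsurj in
lemma red_special (hk3 : 3 ≤ k) (hxA : x ∉ A) (hx : x ∈ W) (hwcard : W.card = k + 1)
    (hb : (W ∩ A).card = 2)
    (hred : ∀ i, ((window f k i) ∩ A).card ≠ (if x ∈ window f k i then 2 else 1)) :
    False := by
  have hw : 0 < W.card := by omega
  set S := insert x (W ∩ A) with hS_def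
  have hSsub : S ⊆ W := by
    intro v hv
    rw [hS_def, Finset.mem_insert] at hv
    rcases hv with rfl | hv
    · exact hx
    · exact (Finset.mem_inter.mp hv).1
  have hScard : S.card ≤ 3 := by
    calc S.card ≤ (W ∩ A).card + 1 := Finset.card_insert_le _ _
      _ ≤ 3 := by omega
  have hWS : 1 ≤ (W \ S).card := by
    rw [Finset.card_sdiff_of_subset hSsub]
    omega
  obtain ⟨y, hy⟩ := Finset.card_pos.mp (show 0 < (W \ S).card by omega)
  obtain ⟨hyW, hyS⟩ := Finset.mem_sdiff.mp hy
  have hyx : y ≠ x := fun h => hyS (by rw [hS_def, h]; exact Finset.mem_insert_self _ _)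
  have hyA : y ∉ A := fun h => hyS (by
    rw [hS_def]
    exact Finset.mem_insert_of_mem (Finset.mem_inter.mpr ⟨hyW, h⟩))
  obtain ⟨iy', hiy'⟩ := hsurj y hyW
  set iy := iy' % W.card with hiy_def
  have hfiy : f iy = y := by rw [hiy_def, ← f_mod hper _ hw]; exact hiy'
  set e := window f k (iy + 1) with he_def
  have hyne : y ∉ e := by
    intro hmem'
    obtain ⟨j, hj, hfj⟩ := mem_window.mp hmem'
    have heq : f (iy + (1 + j)) = f (iy + 0) := by
      rw [show iy + (1 + j) = iy + 1 + j by omega, hfj, Nat.add_zero, hfiy]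
    have hc := idx_cancel hper hinj hw heq
    rw [Nat.mod_eq_of_lt (by omega), Nat.mod_eq_of_lt (by omega)] at hc
    omega
  have hesub : e ⊆ W \ {y} := by
    intro v hv
    rw [Finset.mem_sdiff, Finset.mem_singleton]
    exact ⟨window_subset hmem _ hv, fun h => hyne (h ▸ hv)⟩
  have hecard : e.card = k := window_card hper hinj hkw _
  have hWycard : (W \ {y}).card = k := by
    rw [Finset.card_sdiff_of_subset (Finset.singleton_subset_iff.mpr hyW)]
    simp [hwcard]
  have hee : e = W \ {y} :=
    Finset.eq_of_subset_of_card_le hesub (by omega)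
  have hxe : x ∈ e := by
    rw [hee, Finset.mem_sdiff, Finset.mem_singleton]
    exact ⟨hx, fun h => hyx h.symm⟩
  have hinter : e ∩ A = W ∩ A := by
    rw [hee]
    ext v
    simp only [Finset.mem_inter, Finset.mem_sdiff, Finset.mem_singleton]
    constructor
    · rintro ⟨⟨hvW, _⟩, hvA⟩; exact ⟨hvW, hvA⟩
    · rintro ⟨hvW, hvA⟩
      exact ⟨⟨hvW, fun h => hyA (h ▸ hvA)⟩, hvA⟩
  have := hred (iy + 1)
  rw [← he_def, hinter, hb, if_pos hxe] at this
  exact this rfl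

end Special


end Cycle

end TightCycleAux

/-- `W` is the vertex set of a (possibly degenerate) tight cycle all of whose edges satisfy
the predicate `E` (e.g. "is a red edge"): either `|W| < k` (degenerate case), or `W` admits a
cyclic ordering all of whose sets of `k` consecutive vertices satisfy `E`. -/
def IsTightCycleSetOn {V : Type*} [DecidableEq V] (k : ℕ) (E : Finset V → Prop)
    (W : Finset V) : Prop :=
  W.card < k ∨
    ∃ f : ℕ → V,
      (∀ i, f (i + W.card) = f i) ∧
      (∀ i, f i ∈ W) ∧
      (∀ i j, i < W.card → j < W.card → f i = f j → i = j) ∧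
      (∀ v ∈ W, ∃ i, f i = v) ∧
      (∀ i, E ((Finset.range k).image (fun j => f (i + j))))

/-- For all `k ≥ 3` and `m ≥ k + 1`, there is a 2-edge-colouring (`true` = red, `false` = blue)
of the complete `k`-graph on `k(m+1)+1` vertices whose vertex set admits no partition into the
vertex set of a red tight cycle and the vertex set of a blue tight cycle
(possibly degenerate). -/
theorem stmt0 (k m : ℕ) (hk : 3 ≤ k) (hm : k + 1 ≤ m) :
    ∃ c : Finset (Fin (k * (m + 1) + 1)) → Bool,
      ¬ ∃ V1 V2 : Finset (Fin (k * (m + 1) + 1)),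
          Disjoint V1 V2 ∧ V1 ∪ V2 = Finset.univ ∧
          IsTightCycleSetOn k (fun e => c e = true) V1 ∧
          IsTightCycleSetOn k (fun e => c e = false) V2 := by
  set n := k * (m + 1) + 1 with hn_def
  have hk0 : 0 < k := by omega
  -- product facts used throughout
  have hp1 : k * (m + 1) = k * m + k := by ring
  have hp2 : k ≤ k * m := by
    calc k = k * 1 := by ring
      _ ≤ k * m := Nat.mul_le_mul_left k (by omega)
  have hp3 : k * k ≤ k * m := Nat.mul_le_mul_left k (by omega)
  have hp4 : m ≤ k * m := by
    calc m = 1 * m := by ring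
      _ ≤ k * m := Nat.mul_le_mul_right m (by omega)
  have hmn : m + 2 < n := by omega
  -- the special set A = {1, ..., m+2} (as elements of Fin n)
  have hbound : ∀ t ∈ Finset.Icc 1 (m + 2), t < n := by
    intro t ht
    rw [Finset.mem_Icc] at ht
    omega
  set A : Finset (Fin n) := Finset.attachFin (Finset.Icc 1 (m + 2)) hbound with hA_def
  have hAcard : A.card = m + 2 := by
    rw [hA_def, Finset.card_attachFin, Nat.card_Icc]
    omega
  have h0A : (0 : Fin n) ∉ A := by
    rw [hA_def, Finset.mem_attachFin]
    rw [Finset.mem_Icc]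
    simp
  -- the colouring
  set c : Finset (Fin n) → Bool := fun e =>
    if (e ∩ A).card = (if (0 : Fin n) ∈ e then 2 else 1) then false else true with hc_def
  have hcred : ∀ e : Finset (Fin n),
      c e = true ↔ (e ∩ A).card ≠ (if (0 : Fin n) ∈ e then 2 else 1) := by
    intro e
    by_cases h : (e ∩ A).card = (if (0 : Fin n) ∈ e then 2 else 1) <;> simp [hc_def, h]
  have hcblue : ∀ e : Finset (Fin n),
      c e = false ↔ (e ∩ A).card = (if (0 : Fin n) ∈ e then 2 else 1) := by
    intro e
    by_cases h : (e ∩ A).card = (if (0 : Fin n) ∈ e then 2 else 1) <;> simp [hc_def, h]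
  refine ⟨c, ?_⟩
  rintro ⟨V1, V2, hdisj, hcover, hV1, hV2⟩
  -- cardinality bookkeeping
  have hw12 : V1.card + V2.card = n := by
    have h1 := Finset.card_union_of_disjoint hdisj
    rw [hcover] at h1
    rw [Finset.card_univ, Fintype.card_fin] at h1
    omega
  have hb12 : (V1 ∩ A).card + (V2 ∩ A).card = m + 2 := by
    have hAun : (V1 ∩ A) ∪ (V2 ∩ A) = A := by
      rw [← Finset.union_inter_distrib_right, hcover, Finset.univ_inter]
    have hAdisj : Disjoint (V1 ∩ A) (V2 ∩ A) :=
      hdisj.mono Finset.inter_subset_left Finset.inter_subset_left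
    have := Finset.card_union_of_disjoint hAdisj
    rw [hAun] at this
    omega
  have hb2w : (V2 ∩ A).card ≤ V2.card := Finset.card_le_card Finset.inter_subset_left
  have hb1w : (V1 ∩ A).card ≤ V1.card := Finset.card_le_card Finset.inter_subset_left
  by_cases hc1 : k ≤ V1.card <;> by_cases hc2 : k ≤ V2.card
  · -- both nondegenerate
    rcases hV1 with h | ⟨f1, hper1, hmem1, hinj1, hsurj1, hE1⟩
    · omega
    rcases hV2 with h | ⟨f2, hper2, hmem2, hinj2, hsurj2, hE2⟩
    · omega
    have hred1 : ∀ i, ((window f1 k i) ∩ A).card ≠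
        (if (0 : Fin n) ∈ window f1 k i then 2 else 1) :=
      fun i => (hcred _).mp (hE1 i)
    have hblue2 : ∀ i, ((window f2 k i) ∩ A).card =
        (if (0 : Fin n) ∈ window f2 k i then 2 else 1) :=
      fun i => (hcblue _).mp (hE2 i)
    have hredS := red_struct hper1 hmem1 hinj1 hc1 hsurj1 (0 : Fin n) A hk0 h0A hred1
    rcases blue_struct hper2 hmem2 hinj2 hc2 hsurj2 (0 : Fin n) A hk0 h0A hblue2 with
      ⟨h0V2, hkb2⟩ | ⟨h0V2, hw2k⟩
    · -- 0 ∉ V2, k * b2 = w2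
      have h0V1 : (0 : Fin n) ∈ V1 := by
        have : (0 : Fin n) ∈ V1 ∪ V2 := by rw [hcover]; exact Finset.mem_univ _
        rcases Finset.mem_union.mp this with h | h
        · exact h
        · exact absurd h h0V2
      -- b2 ≤ m
      have hb2m : (V2 ∩ A).card ≤ m := by
        by_contra hcon
        have h1 : k * (m + 1) ≤ k * (V2 ∩ A).card := Nat.mul_le_mul_left k (by omega)
        omega
      have hd : ∃ d, (V2 ∩ A).card + d = m + 1 := ⟨m + 1 - (V2 ∩ A).card, by omega⟩
      obtain ⟨d, hd⟩ := hd
      have hd1 : 1 ≤ d := by omega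
      have hkm1 : k * (m + 1) = k * (V2 ∩ A).card + k * d := by
        rw [show m + 1 = (V2 ∩ A).card + d by omega, Nat.mul_add]
      have hw1d : V1.card = k * d + 1 := by omega
      have hb1d : (V1 ∩ A).card = d + 1 := by omega
      rcases hredS with h0 | hge
      · omega
      · have hdiv : (V1.card - 1) / k = d := by
          rw [hw1d]
          simp [Nat.mul_div_cancel_left d hk0, Nat.mul_comm]
        rw [hdiv, hb1d] at hge
        have hdd : d = 1 := by omega
        have hkd : k * d = k := by rw [hdd, Nat.mul_one]
        exact red_special hper1 hmem1 hinj1 hc1 hsurj1 (0 : Fin n) A hk h0A h0V1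
          (by omega) (by omega) hred1
    · -- 0 ∈ V2, V2.card = k
      have h0V1 : (0 : Fin n) ∉ V1 := fun h =>
        (Finset.disjoint_left.mp hdisj h) h0V2
      have hw1v : V1.card = k * m + 1 := by omega
      rcases hredS with h0 | hge
      · omega
      · have hdiv : m ≤ (V1.card - 1) / k := by
          rw [Nat.le_div_iff_mul_le hk0]
          have : m * k = k * m := Nat.mul_comm m k
          omega
        omega
  · -- V1 nondegenerate, V2 degenerate (V2.card < k)
    rcases hV1 with h | ⟨f1, hper1, hmem1, hinj1, hsurj1, hE1⟩
    · omega
    have hred1 : ∀ i, ((window f1 k i) ∩ A).card ≠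
        (if (0 : Fin n) ∈ window f1 k i then 2 else 1) :=
      fun i => (hcred _).mp (hE1 i)
    have hredS := red_struct hper1 hmem1 hinj1 hc1 hsurj1 (0 : Fin n) A hk0 h0A hred1
    rcases hredS with h0 | hge
    · omega
    · have hdiv : m ≤ (V1.card - 1) / k := by
        rw [Nat.le_div_iff_mul_le hk0]
        have : m * k = k * m := Nat.mul_comm m k
        omega
      omega
  · -- V1 degenerate (V1.card < k), V2 nondegenerate
    rcases hV2 with h | ⟨f2, hper2, hmem2, hinj2, hsurj2, hE2⟩
    · omega
    have hblue2 : ∀ i, ((window f2 k i) ∩ A).card =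
        (if (0 : Fin n) ∈ window f2 k i then 2 else 1) :=
      fun i => (hcblue _).mp (hE2 i)
    rcases blue_struct hper2 hmem2 hinj2 hc2 hsurj2 (0 : Fin n) A hk0 h0A hblue2 with
      ⟨h0V2, hkb2⟩ | ⟨h0V2, hw2k⟩
    · -- 0 ∉ V2, k * b2 = w2 ; V1 small
      have h0V1 : (0 : Fin n) ∈ V1 := by
        have : (0 : Fin n) ∈ V1 ∪ V2 := by rw [hcover]; exact Finset.mem_univ _
        rcases Finset.mem_union.mp this with h | h
        · exact h
        · exact absurd h h0V2
      have hb2m : (V2 ∩ A).card ≤ m + 1 := by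
        by_contra hcon
        have h1 : k * (m + 2) ≤ k * (V2 ∩ A).card := Nat.mul_le_mul_left k (by omega)
        have h2 : k * (m + 2) = k * m + k + k := by ring
        omega
      have hd : ∃ d, (V2 ∩ A).card + d = m + 1 := ⟨m + 1 - (V2 ∩ A).card, by omega⟩
      obtain ⟨d, hd⟩ := hd
      have hkm1 : k * (m + 1) = k * (V2 ∩ A).card + k * d := by
        rw [show m + 1 = (V2 ∩ A).card + d by omega, Nat.mul_add]
      have hw1d : V1.card = k * d + 1 := by omega
      have hd0 : d = 0 := by
        by_contra hcon
        have hkd : k ≤ k * d := by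
          calc k = k * 1 := by ring
            _ ≤ k * d := Nat.mul_le_mul_left k (by omega)
        omega
      have hkd0 : k * d = 0 := by rw [hd0, Nat.mul_zero]
      have hw11 : V1.card = 1 := by omega
      have hb11 : (V1 ∩ A).card = 1 := by omega
      obtain ⟨z, hz⟩ := Finset.card_eq_one.mp hw11
      have hz0 : z = 0 := by
        have := h0V1
        rw [hz, Finset.mem_singleton] at this
        exact this.symm
      rw [hz, hz0] at hb11
      rw [Finset.singleton_inter_of_notMem h0A] at hb11
      simp at hb11
    · -- 0 ∈ V2, V2.card = k : contradiction with V1.card < k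
      omega
  · -- both degenerate
    omega
end

section
/- Let k ≥ 2, let 0 ≤ α ≤ 1 and μ > 1/2, and let H be a (μ, α)-dense k-graph on n vertices. Then H is tightly connected, i.e., every two edges of H are tightly connected in H. -/
open Finset

/-- `degOn k H S W` is `d_H(S, W)`: the number of `(k - |S|)`-element subsets `e` of `W`
with `e ∪ S` an edge of the `k`-graph `H`. -/
def degOn {V : Type*} [DecidableEq V] (k : ℕ) (H : Finset (Finset V)) (S W : Finset V) : ℕ :=
  ((W.powersetCard (k - S.card)).filter (fun e => e ∪ S ∈ H)).card

/-- `degT k H S` is `d_H(S) = d_H(S, V)`. -/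
def degT {V : Type*} [Fintype V] [DecidableEq V] (k : ℕ) (H : Finset (Finset V))
    (S : Finset V) : ℕ :=
  degOn k H S Finset.univ

/-- A `k`-graph `H` on the vertex set `V` is `(μ, α)`-dense. -/
def IsDense {V : Type*} [Fintype V] [DecidableEq V] (k : ℕ) (H : Finset (Finset V))
    (μ α : ℝ) : Prop :=
  ∀ i : ℕ, 1 ≤ i → i ≤ k - 1 →
    (({S : Finset V | S.card = i ∧
        (degT k H S : ℝ) < μ * ((Fintype.card V).choose (k - i))}.ncard : ℝ)
      ≤ α * ((Fintype.card V).choose i)) ∧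
    ∀ S : Finset V, S.card = i →
      (degT k H S : ℝ) < μ * ((Fintype.card V).choose (k - i)) → degT k H S = 0

/-- Two edges `f, f'` of a `k`-graph `Hc` are tightly connected: there is a walk of edges,
consecutive ones sharing `k - 1` vertices. -/
def TightConn {V : Type*} [DecidableEq V] (k : ℕ) (Hc : Finset (Finset V)) (f f' : Finset V) : Prop :=
  ∃ (t : ℕ) (e : ℕ → Finset V), e 0 = f ∧ e t = f' ∧ (∀ i ≤ t, e i ∈ Hc) ∧
    ∀ i < t, ((e i) ∩ (e (i + 1))).card = k - 1

/-- `C` is a tightly connected subgraph of the `k`-graph `Hc`. -/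
def IsTCSub {V : Type*} [DecidableEq V] (k : ℕ) (Hc C : Finset (Finset V)) : Prop :=
  C ⊆ Hc ∧ ∀ f ∈ C, ∀ f' ∈ C, TightConn k Hc f f'

/-- `C` is a tight component (a maximal tightly connected subgraph) of the `k`-graph `Hc`. -/
def IsTightComponent {V : Type*} [DecidableEq V] (k : ℕ) (Hc C : Finset (Finset V)) : Prop :=
  IsTCSub k Hc C ∧ ∀ C' : Finset (Finset V), IsTCSub k Hc C' → C ⊆ C' → C' = C

/-- The shadow of `H` consisting of all `r`-element sets contained in some edge of `H`. -/
def shadowTo {V : Type*} [Fintype V] [DecidableEq V] (r : ℕ) (H : Finset (Finset V)) :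
    Finset (Finset V) :=
  ((Finset.univ : Finset V).powersetCard r).filter (fun e => ∃ f ∈ H, e ⊆ f)

/-- An `ε`-blueprint for a 2-edge-coloured `k`-graph `H` (with colouring `cH`, `true` = red):
a 2-edge-coloured `(k-2)`-graph together with the assignment `comp` of monochromatic tight
components, satisfying (BP1) and (BP2). -/
structure Blueprint (k : ℕ) {V : Type*} [Fintype V] [DecidableEq V]
    (H : Finset (Finset V)) (cH : Finset V → Bool) (ε : ℝ) where
  verts : Finset V
  edges : Finset (Finset V)
  col : Finset V → Bool
  comp : Finset V → Finset (Finset V)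
  edges_card : ∀ e ∈ edges, e.card = k - 2
  edges_sub : ∀ e ∈ edges, e ⊆ verts
  comp_is : ∀ e ∈ edges, IsTightComponent k (H.filter (fun f => cH f = col e)) (comp e)
  comp_deg : ∀ e ∈ edges,
    (1 - ε) * (Fintype.card V : ℝ) ≤ (degT (k - 1) (shadowTo (k - 1) (comp e)) e : ℝ)
  comp_agree : ∀ e ∈ edges, ∀ e' ∈ edges, col e = col e' → (e ∩ e').card = k - 3 →
    comp e = comp e'

/-- For a subset `G'` of the edges of a blueprint `G`, the `k`-graph `(G')⁺`: all edges of
`⋃_{e ∈ G'} H(e)` containing some edge of `G'`. -/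
def Blueprint.plus {k : ℕ} {V : Type*} [Fintype V] [DecidableEq V]
    {H : Finset (Finset V)} {cH : Finset V → Bool} {ε : ℝ}
    (G : Blueprint k H cH ε) (G' : Finset (Finset V)) : Finset (Finset V) :=
  (G'.biUnion (fun e => G.comp e)).filter (fun f => ∃ e ∈ G', e ⊆ f)

/-- `M` is a matching: a set of pairwise disjoint edges. -/
def IsMatching {V : Type*} [DecidableEq V] (M : Finset (Finset V)) : Prop :=
  ∀ e ∈ M, ∀ f ∈ M, e ≠ f → Disjoint e f

/-- `M` is a tightly connected matching in the `k`-graph `Hc`. -/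
def IsTCMatching {V : Type*} [DecidableEq V] (k : ℕ) (Hc M : Finset (Finset V)) : Prop :=
  M ⊆ Hc ∧ IsMatching M ∧ ∀ e ∈ M, ∀ f ∈ M, TightConn k Hc e f

lemma tc_refl {V : Type*} [DecidableEq V] (k : ℕ) (Hc : Finset (Finset V)) (f : Finset V)
    (hf : f ∈ Hc) : TightConn k Hc f f :=
  ⟨0, fun _ => f, rfl, rfl, fun _ _ => hf, fun i hi => by omega⟩

lemma tc_step {V : Type*} [DecidableEq V] (k : ℕ) (Hc : Finset (Finset V)) (f g : Finset V)
    (hf : f ∈ Hc) (hg : g ∈ Hc) (h : (f ∩ g).card = k - 1) : TightConn k Hc f g := by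
  refine ⟨1, fun i => if i = 0 then f else g, rfl, rfl, ?_, ?_⟩
  · intro i _; dsimp only; split <;> assumption
  · intro i hi
    have : i = 0 := by omega
    subst this; simpa using h

lemma tc_trans {V : Type*} [DecidableEq V] {k : ℕ} {Hc : Finset (Finset V)} {f g h : Finset V}
    (h1 : TightConn k Hc f g) (h2 : TightConn k Hc g h) : TightConn k Hc f h := by
  obtain ⟨t, e, he0, het, hem, hes⟩ := h1
  obtain ⟨t', e', he0', het', hem', hes'⟩ := h2
  refine ⟨t + t', fun i => if i < t then e i else e' (i - t), ?_, ?_, ?_, ?_⟩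
  · dsimp only; split
    · exact he0
    · have ht : t = 0 := by omega
      subst ht
      simp only [Nat.sub_zero]
      rw [he0', ← het, he0]
  · dsimp only
    have : ¬ (t + t' < t) := by omega
    rw [if_neg this, Nat.add_sub_cancel_left]; exact het'
  · intro i hi; dsimp only; split
    · exact hem i (by omega)
    · exact hem' (i - t) (by omega)
  · intro i hi; dsimp only
    by_cases h1 : i < t
    · rw [if_pos h1]
      by_cases h2 : i + 1 < t
      · rw [if_pos h2]; exact hes i h1
      · rw [if_neg h2]
        have : i + 1 = t := by omega
        rw [this, Nat.sub_self, he0', ← het, ← this]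
        exact hes i h1
    · rw [if_neg h1, if_neg (by omega : ¬ (i + 1 < t))]
      have : i + 1 - t = (i - t) + 1 := by omega
      rw [this]
      exact hes' (i - t) (by omega)

lemma degT_eq_card (k : ℕ) (hk : 1 ≤ k) {n : ℕ} (H : Finset (Finset (Fin n)))
    (S : Finset (Fin n)) (hS : S.card = k - 1) :
    degT k H S = (univ.filter fun v => insert v S ∈ H).card := by
  unfold degT degOn
  rw [hS, show k - (k - 1) = 1 by omega]
  symm
  apply Finset.card_bij (fun v _ => ({v} : Finset (Fin n)))
  · intro v hv
    simp only [mem_filter, mem_powersetCard] at hv ⊢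
    refine ⟨⟨singleton_subset_iff.2 (mem_univ v), card_singleton v⟩, ?_⟩
    rw [← insert_eq]; exact hv.2
  · intro a _ b _ hab
    exact Finset.singleton_inj.mp hab
  · intro e he
    simp only [mem_filter, mem_powersetCard] at he
    obtain ⟨v, rfl⟩ := card_eq_one.mp he.1.2
    refine ⟨v, ?_, rfl⟩
    simp only [mem_filter, mem_univ, true_and]
    rw [insert_eq]; exact he.2

/-- Let `k ≥ 2`, `0 ≤ α ≤ 1`, `μ > 1/2` and let `H` be a `(μ, α)`-dense `k`-graph on `n`
vertices. Then `H` is tightly connected: every two edges of `H` are tightly connected. -/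
theorem stmt4 (k n : ℕ) (hk : 2 ≤ k) (α μ : ℝ)
    (hα0 : 0 ≤ α) (hα1 : α ≤ 1) (hμ : 1 / 2 < μ)
    (H : Finset (Finset (Fin n))) (hcard : ∀ e ∈ H, e.card = k)
    (hdense : IsDense k H μ α) :
    ∀ f ∈ H, ∀ f' ∈ H, TightConn k H f f' := by
  intro f hf f' hf'
  have hkn : k ≤ n := by
    have := Finset.card_le_univ f
    rwa [hcard f hf, Fintype.card_fin] at this
  have hdeg : ∀ S : Finset (Fin n), S.card = k - 1 → (∃ g ∈ H, S ⊆ g) →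
      μ * n ≤ ((univ.filter fun v => insert v S ∈ H).card : ℝ) := by
    rintro S hS ⟨g, hg, hSg⟩
    have hpos : degT k H S ≠ 0 := by
      have hmem : g \ S ∈ ((univ : Finset (Fin n)).powersetCard (k - S.card)).filter
          (fun e => e ∪ S ∈ H) := by
        rw [mem_filter, mem_powersetCard]
        refine ⟨⟨subset_univ _, ?_⟩, ?_⟩
        · rw [card_sdiff_of_subset hSg, hcard g hg]
        · rw [sdiff_union_of_subset hSg]; exact hg
      exact Finset.card_ne_zero_of_mem hmem
    have h2 := (hdense (k - 1) (by omega) (le_refl _)).2 S hS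
    have h3 : ¬ ((degT k H S : ℝ) < μ * ((Fintype.card (Fin n)).choose (k - (k - 1)))) :=
      fun hlt => hpos (h2 hlt)
    push_neg at h3
    rw [degT_eq_card k (by omega) H S hS] at h3
    simpa [Fintype.card_fin, show k - (k - 1) = 1 by omega] using h3
  have key : ∀ d : ℕ, ∀ g ∈ H, ∀ g' ∈ H, k ≤ (g ∩ g').card + d → TightConn k H g g' := by
    intro d
    induction d with
    | zero =>
      intro g hg g' hg' hcap
      have h1 : g ∩ g' = g := by
        apply eq_of_subset_of_card_le inter_subset_left
        rw [hcard g hg]; omega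
      have h2 : g ⊆ g' := by rw [← h1]; exact inter_subset_right
      have hgg : g = g' :=
        eq_of_subset_of_card_le h2 (by rw [hcard g hg, hcard g' hg'])
      rw [hgg]; exact tc_refl _ _ _ hg'
    | succ d ih =>
      intro g hg g' hg' hcap
      by_cases hle : k ≤ (g ∩ g').card + d
      · exact ih g hg g' hg' hle
      push_neg at hle
      obtain ⟨S1, hCS1, hS1g, hS1⟩ :=
        exists_subsuperset_card_eq (inter_subset_left : g ∩ g' ⊆ g)
          (by omega : (g ∩ g').card ≤ k - 1) (by rw [hcard g hg]; omega)
      obtain ⟨S2, hCS2, hS2g, hS2⟩ :=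
        exists_subsuperset_card_eq (inter_subset_right : g ∩ g' ⊆ g')
          (by omega : (g ∩ g').card ≤ k - 1) (by rw [hcard g' hg']; omega)
      set N1 := univ.filter fun v => insert v S1 ∈ H with hN1def
      set N2 := univ.filter fun v => insert v S2 ∈ H with hN2def
      have hN1 := hdeg S1 hS1 ⟨g, hg, hS1g⟩
      have hN2 := hdeg S2 hS2 ⟨g', hg', hS2g⟩
      have hcapn : 0 < (N1 ∩ N2).card := by
        by_contra hcon
        have hle2 : N1.card + N2.card ≤ n := by
          have h4 := card_union_add_card_inter N1 N2
          have hu : (N1 ∪ N2).card ≤ n := by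
            simpa [Fintype.card_fin] using card_le_univ (N1 ∪ N2)
          omega
        have hnn : (1 : ℝ) ≤ (n : ℝ) := by
          exact_mod_cast le_trans (by omega : 1 ≤ k) hkn
        have hlt : (n : ℝ) < (N1.card : ℝ) + (N2.card : ℝ) := by nlinarith
        have : (n : ℝ) < (n : ℝ) :=
          lt_of_lt_of_le hlt (by exact_mod_cast hle2)
        linarith
      obtain ⟨v, hv⟩ := card_pos.mp hcapn
      rw [mem_inter, hN1def, hN2def, mem_filter, mem_filter] at hv
      have hv1 : insert v S1 ∈ H := hv.1.2
      have hv2 : insert v S2 ∈ H := hv.2.2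
      have hvS1 : v ∉ S1 := by
        intro hvv
        have := hcard _ hv1
        rw [insert_eq_self.2 hvv, hS1] at this
        omega
      have hvS2 : v ∉ S2 := by
        intro hvv
        have := hcard _ hv2
        rw [insert_eq_self.2 hvv, hS2] at this
        omega
      have conn1 : TightConn k H g (insert v S1) := by
        by_cases hvg : v ∈ g
        · have hsub : insert v S1 ⊆ g := insert_subset hvg hS1g
          have heq : insert v S1 = g :=
            eq_of_subset_of_card_le hsub (by rw [hcard _ hv1, hcard g hg])
          rw [heq]; exact tc_refl _ _ _ hg
        · apply tc_step _ _ _ _ hg hv1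
          have heq : g ∩ insert v S1 = S1 := by
            apply Subset.antisymm
            · intro x hx
              rw [mem_inter, mem_insert] at hx
              rcases hx.2 with rfl | hxx
              · exact absurd hx.1 hvg
              · exact hxx
            · exact subset_inter hS1g (subset_insert v S1)
          rw [heq, hS1]
      have conn3 : TightConn k H (insert v S2) g' := by
        by_cases hvg : v ∈ g'
        · have hsub : insert v S2 ⊆ g' := insert_subset hvg hS2g
          have heq : insert v S2 = g' :=
            eq_of_subset_of_card_le hsub (by rw [hcard _ hv2, hcard g' hg'])
          rw [heq]; exact tc_refl _ _ _ hg'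
        · apply tc_step _ _ _ _ hv2 hg'
          have heq : insert v S2 ∩ g' = S2 := by
            apply Subset.antisymm
            · intro x hx
              rw [mem_inter, mem_insert] at hx
              rcases hx.1 with rfl | hxx
              · exact absurd hx.2 hvg
              · exact hxx
            · exact subset_inter (subset_insert v S2) hS2g
          rw [heq, hS2]
      have conn2 : TightConn k H (insert v S1) (insert v S2) := by
        apply ih _ hv1 _ hv2
        have hvC : v ∉ g ∩ g' := fun hvv => hvS1 (hCS1 hvv)
        have hsub : insert v (g ∩ g') ⊆ insert v S1 ∩ insert v S2 := by
          apply insert_subset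
          · exact mem_inter.2 ⟨mem_insert_self v S1, mem_insert_self v S2⟩
          · exact subset_inter (hCS1.trans (subset_insert v S1))
              (hCS2.trans (subset_insert v S2))
        have hc2 : (g ∩ g').card + 1 ≤ (insert v S1 ∩ insert v S2).card := by
          calc (g ∩ g').card + 1 = (insert v (g ∩ g')).card :=
                (card_insert_of_notMem hvC).symm
            _ ≤ _ := card_le_card hsub
        omega
      exact tc_trans (tc_trans conn1 conn2) conn3
  exact key k f hf f' hf' (Nat.le_add_left k _)
end

section
/- For every integer k ≥ 2 there exists α_0 > 0 such that for every 0 < α ≤ α_0 there exists n_0 such that for all n ≥ n_0 the following holds: every k-graph H on n vertices with |H| ≥ (1−α)·binom(n,k) has a spanning subgraph H' (with V(H') = V(H)) that is (1 − 2α^{1/(4k²)}, 2α^{1/(4k²)})-dense. -/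
open Finset

section AuxStmt5
variable {n : ℕ}

/-- counting supersets of `U` of size `j` inside `X`. -/
lemma aux5_card_sup (X U : Finset (Fin n)) (j : ℕ) (hU : U ⊆ X) (hj : U.card ≤ j) :
    ((X.powersetCard j).filter (fun T => U ⊆ T)).card
      = (X.card - U.card).choose (j - U.card) := by
  rw [← Finset.card_sdiff_of_subset hU, ← Finset.card_powersetCard]
  apply Finset.card_bij' (fun T _ => T \ U) (fun e _ => e ∪ U)
  · intro T hT
    simp only [mem_filter, mem_powersetCard] at hT ⊢
    refine ⟨sdiff_subset_sdiff hT.1.1 Subset.rfl, ?_⟩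
    rw [card_sdiff_of_subset hT.2, hT.1.2]
  · intro e he
    simp only [mem_filter, mem_powersetCard] at he ⊢
    have hdisj : Disjoint e U := disjoint_of_subset_left he.1 sdiff_disjoint
    refine ⟨⟨union_subset (he.1.trans (sdiff_subset)) hU, ?_⟩, subset_union_right⟩
    rw [card_union_of_disjoint hdisj, he.2]
    omega
  · intro T hT
    simp only [mem_filter, mem_powersetCard] at hT
    exact sdiff_union_of_subset hT.2
  · intro e he
    simp only [mem_filter, mem_powersetCard] at he
    have hdisj : Disjoint e U := disjoint_of_subset_left he.1 sdiff_disjoint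
    rw [union_sdiff_distrib, sdiff_self]
    simp [sdiff_eq_self_of_disjoint hdisj]

/-- inequality version, no hypotheses. -/
lemma aux5_card_sup_le (X U : Finset (Fin n)) (j : ℕ) :
    ((X.powersetCard j).filter (fun T => U ⊆ T)).card
      ≤ (X.card - U.card).choose (j - U.card) := by
  by_cases hU : U ⊆ X
  · by_cases hj : U.card ≤ j
    · exact (aux5_card_sup X U j hU hj).le
    · have : ((X.powersetCard j).filter (fun T => U ⊆ T)) = ∅ := by
        refine filter_eq_empty_iff.2 ?_
        intro T hT hUT
        rw [mem_powersetCard] at hT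
        exact hj ((card_le_card hUT).trans hT.2.le)
      simp [this]
  · have : ((X.powersetCard j).filter (fun T => U ⊆ T)) = ∅ := by
      refine filter_eq_empty_iff.2 ?_
      intro T hT hUT
      rw [mem_powersetCard] at hT
      exact hU (hUT.trans hT.1)
    simp [this]

/-- double counting pairs. -/
lemma aux5_double_count (A B : Finset (Finset (Fin n))) :
    ∑ T ∈ A, (B.filter (fun f => T ⊆ f)).card
      = ∑ f ∈ B, (A.filter (fun T => T ⊆ f)).card := by
  simp only [card_filter]
  exact Finset.sum_comm

end AuxStmt5

section AuxStmt5b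
variable {n : ℕ}

lemma aux5_choose_id (N a b : ℕ) (h : a + b ≤ N) :
    N.choose a * (N - a).choose b = N.choose (a + b) * (a + b).choose a := by
  have := Nat.choose_mul (n := N) (k := a + b) (s := a) (Nat.le_add_right a b)
  simpa using this.symm

lemma aux5_tel (N r : ℕ) (hr : 1 ≤ r) : ∀ t : ℕ,
    N.choose r ≤ (N - t).choose r + t * (N - 1).choose (r - 1) := by
  intro t
  induction t with
  | zero => simp
  | succ t ih =>
    have h2 : (N - t).choose r ≤ (N - (t+1)).choose r + (N - 1).choose (r - 1) := by
      rcases Nat.eq_zero_or_pos (N - t) with h0 | h0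
      · have h1 : N - (t+1) = 0 := by omega
        rw [h0, h1]
        omega
      · have hm : N - t = (N - (t+1)) + 1 := by omega
        have hrr : r = (r - 1) + 1 := by omega
        have key : (N - t).choose r
            = (N-(t+1)).choose (r-1) + (N-(t+1)).choose r := by
          rw [hm]
          conv_lhs => rw [hrr]
          rw [Nat.choose_succ_succ, Nat.succ_eq_add_one, ← hrr]
        rw [key]
        have h5 : (N - (t+1)).choose (r - 1) ≤ (N - 1).choose (r - 1) :=
          Nat.choose_le_choose _ (by omega)
        omega
    have h6 : (t+1) * (N-1).choose (r-1) = t * (N-1).choose (r-1) + (N-1).choose (r-1) := by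
      ring
    omega

lemma aux5_abs (N r : ℕ) (hN : 1 ≤ N) (hr : 1 ≤ r) :
    N * (N - 1).choose (r - 1) = N.choose r * r := by
  have := Nat.add_one_mul_choose_eq (N - 1) (r - 1)
  rw [Nat.sub_add_cancel hN,
    Nat.sub_add_cancel hr] at this
  exact this

lemma aux5_choose_le_two_pow (N r : ℕ) : N.choose r ≤ 2 ^ N := by
  rcases le_or_gt r N with h | h
  · calc N.choose r ≤ ∑ m ∈ Finset.range (N + 1), N.choose m :=
          Finset.single_le_sum (f := fun m => N.choose m) (fun _ _ => Nat.zero_le _)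
            (Finset.mem_range.2 (by omega))
    _ = 2 ^ N := Nat.sum_range_choose N
  · rw [Nat.choose_eq_zero_of_lt h]; exact Nat.zero_le _

lemma aux5_degT_eq (k : ℕ) (H : Finset (Finset (Fin n)))
    (hH : ∀ f ∈ H, f.card = k) (U : Finset (Fin n)) (hU : U.card ≤ k) :
    degT k H U = (H.filter (fun f => U ⊆ f)).card := by
  unfold degT degOn
  apply Finset.card_bij' (fun e _ => e ∪ U) (fun f _ => f \ U)
  · intro e he
    simp only [mem_filter, mem_powersetCard] at he ⊢
    exact ⟨he.2, subset_union_right⟩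
  · intro f hf
    simp only [mem_filter, mem_powersetCard] at hf ⊢
    refine ⟨⟨subset_univ _, ?_⟩, ?_⟩
    · rw [card_sdiff_of_subset hf.2, hH f hf.1]
    · rw [sdiff_union_of_subset hf.2]
      exact hf.1
  · intro e he
    simp only [mem_filter, mem_powersetCard] at he
    have hcard : (e ∪ U).card = k := hH _ he.2
    have h2 := Finset.card_union_add_card_inter e U
    have h3 : (e ∩ U).card = 0 := by
      have h4 := Finset.card_le_card (Finset.inter_subset_right (s₁ := e) (s₂ := U))
      omega
    have hdisj : Disjoint e U :=
      Finset.disjoint_iff_inter_eq_empty.2 (Finset.card_eq_zero.1 h3)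
    rw [union_sdiff_distrib, sdiff_self]
    simp [sdiff_eq_self_of_disjoint hdisj]
  · intro f hf
    simp only [mem_filter, mem_powersetCard] at hf
    exact sdiff_union_of_subset hf.2

lemma aux5_ratio (N c r kk : ℕ) (hc : c ≤ kk) (hr : r ≤ kk) (hN : 2 * kk^2 ≤ N) :
    (N.choose r : ℝ) ≤ 2 * ((N - c).choose r : ℝ) := by
  rcases Nat.eq_zero_or_pos r with h0 | h0
  · subst h0; simp
  have h1 : (N.choose r : ℝ) ≤ ((N - c).choose r : ℝ) + (c : ℝ) * ((N - 1).choose (r - 1) : ℝ) := by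
    have := aux5_tel N r h0 c
    push_cast at this ⊢
    exact_mod_cast this
  have hN1 : 1 ≤ N := by nlinarith [Nat.one_le_two_pow (n := 1)]
  have h2 : (N : ℝ) * ((N - 1).choose (r - 1) : ℝ) = (N.choose r : ℝ) * r := by
    exact_mod_cast congrArg (Nat.cast : ℕ → ℝ) (aux5_abs N r hN1 h0)
  have hcr : (c : ℝ) * r * 2 ≤ (N : ℝ) := by
    have h3 : c * r * 2 ≤ N := by nlinarith
    exact_mod_cast h3
  have hNpos : (0 : ℝ) < N := by positivity
  have hCnn : (0 : ℝ) ≤ (N.choose r : ℝ) := by positivity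
  have h4 : (c : ℝ) * ((N - 1).choose (r - 1) : ℝ) * 2 ≤ (N.choose r : ℝ) := by
    have h5 : (c : ℝ) * ((N - 1).choose (r - 1) : ℝ) * 2 * N
        = 2 * ((c:ℝ) * r) * (N.choose r : ℝ) := by
      nlinarith [h2]
    nlinarith [mul_nonneg (mul_nonneg (Nat.cast_nonneg c) (Nat.cast_nonneg ((N-1).choose (r-1)))) hCnn]
  linarith

end AuxStmt5b


set_option maxHeartbeats 2000000 in
/-- For every `k ≥ 2` there is `α₀ > 0` such that for all `0 < α ≤ α₀` there is `n₀` such that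
for all `n ≥ n₀`: every `k`-graph `H` on `n` vertices with `|H| ≥ (1-α) C(n,k)` has a spanning
subgraph that is `(1 - 2α^(1/(4k²)), 2α^(1/(4k²)))`-dense. -/
theorem stmt5 (k : ℕ) (hk : 2 ≤ k) :
    ∃ α₀ : ℝ, 0 < α₀ ∧ ∀ α : ℝ, 0 < α → α ≤ α₀ →
      ∃ n₀ : ℕ, ∀ n : ℕ, n₀ ≤ n →
        ∀ H : Finset (Finset (Fin n)), (∀ e ∈ H, e.card = k) →
          (1 - α) * (n.choose k : ℝ) ≤ (H.card : ℝ) →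
          ∃ H' ⊆ H, IsDense k H' (1 - 2 * α ^ ((1 : ℝ) / (4 * (k : ℝ) ^ 2)))
            (2 * α ^ ((1 : ℝ) / (4 * (k : ℝ) ^ 2))) := by
  classical
  set m : ℕ := 4 * k ^ 2 with hm
  set ε₀ : ℝ := ((2 : ℝ) ^ (5 * k + 2))⁻¹ with hε₀
  have hε₀pos : 0 < ε₀ := by positivity
  refine ⟨ε₀ ^ m, by positivity, ?_⟩
  intro α hα hα0
  set β : ℝ := α ^ ((1 : ℝ) / (4 * (k : ℝ) ^ 2)) with hβdef
  have hkR : (0:ℝ) < 4 * (k:ℝ)^2 := by positivity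
  have hβpos : 0 < β := Real.rpow_pos_of_pos hα _
  have hmcast : ((m : ℕ) : ℝ) = 4 * (k:ℝ)^2 := by push_cast [hm]; ring
  have hexp : (1 : ℝ) / (4 * (k : ℝ) ^ 2) * (m : ℝ) = 1 := by
    rw [hmcast]; field_simp
  have hαβ : α = β ^ m := by
    rw [hβdef, ← Real.rpow_natCast (α ^ ((1 : ℝ) / (4 * (k : ℝ) ^ 2))) m,
      ← Real.rpow_mul hα.le, hexp, Real.rpow_one]
  have hβsmall : β ≤ ε₀ := by
    have h1 : β ≤ (ε₀ ^ m) ^ ((1 : ℝ) / (4 * (k : ℝ) ^ 2)) :=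
      Real.rpow_le_rpow hα.le hα0 (by positivity)
    calc β ≤ (ε₀ ^ m) ^ ((1 : ℝ) / (4 * (k : ℝ) ^ 2)) := h1
    _ = ε₀ := by
      rw [← Real.rpow_natCast ε₀ m, ← Real.rpow_mul hε₀pos.le]
      rw [mul_comm ((m:ℕ):ℝ) _, hexp, Real.rpow_one]
  -- numeric facts about β
  have hβC : (2:ℝ) ^ (5 * k + 2) * β ≤ 1 := by
    rw [hε₀] at hβsmall
    calc (2:ℝ) ^ (5*k+2) * β ≤ (2:ℝ)^(5*k+2) * ((2:ℝ) ^ (5 * k + 2))⁻¹ := by gcongr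
    _ = 1 := mul_inv_cancel₀ (by positivity)
  have h2p : ∀ a b : ℕ, a ≤ b → (2:ℝ) ^ a ≤ (2:ℝ) ^ b :=
    fun a b h => pow_le_pow_right₀ one_le_two h
  have h2p1 : ∀ a : ℕ, (1:ℝ) ≤ (2:ℝ) ^ a := fun a => one_le_pow₀ one_le_two
  have hβ1 : β ≤ 1 := by nlinarith [h2p1 (5*k+2), hβpos]
  have hβ2 : 2 * β ≤ 1 := by
    have h1 : (2:ℝ) ^ 1 * β ≤ (2:ℝ) ^ (5*k+2) * β :=
      mul_le_mul_of_nonneg_right (h2p 1 (5*k+2) (by omega)) hβpos.le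
    simpa using h1.trans hβC
  set c : ℕ := ⌈(2 * (k:ℝ) ^ 2) / β⌉₊ with hc
  refine ⟨2 * k ^ 2 + k + 1 + c, ?_⟩
  intro n hn H hHcard hHsize
  have hn2k : 2 * k ^ 2 ≤ n := by omega
  have hnk : k + 1 ≤ n := by nlinarith
  have hnβ : 2 * (k:ℝ)^2 ≤ β * n := by
    have h1 : (c : ℝ) ≤ n := by
      exact_mod_cast Nat.cast_le.2 (show c ≤ n by omega)
    have h2 : (2 * (k:ℝ) ^ 2) / β ≤ n := (Nat.le_ceil _).trans h1
    calc 2 * (k:ℝ)^2 = ((2 * (k:ℝ)^2)/β) * β := by field_simp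
    _ ≤ (n:ℝ) * β := by gcongr
    _ = β * n := mul_comm _ _
  -- main objects
  set K : Finset (Finset (Fin n)) := Finset.univ.powersetCard k with hK
  set MB : Finset (Finset (Fin n)) := K \ H with hMB
  set Mf : Finset (Fin n) → ℕ := fun U => (MB.filter (fun f => U ⊆ f)).card with hMf
  set γ : ℕ → ℝ := fun t => β ^ (2 * (k - t)) with hγ
  set GoodP : Finset (Fin n) → Prop :=
    fun U => (Mf U : ℝ) ≤ γ U.card * ((n.choose (k - U.card) : ℕ) : ℝ) with hGoodP
  set cleanP : Finset (Fin n) → Prop :=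
    fun f => ∀ U ∈ f.powerset, 1 ≤ U.card → U.card ≤ k - 1 → GoodP U with hcleanP
  set H' : Finset (Finset (Fin n)) := H.filter cleanP with hH'
  set badF : ℕ → Finset (Finset (Fin n)) :=
    fun j => (Finset.univ.powersetCard j).filter (fun T => ¬ GoodP T) with hbadF
  have hγpos : ∀ t, 0 < γ t := fun t => by rw [hγ]; positivity
  have hH'sub : H' ⊆ H := filter_subset _ _
  have hH'card : ∀ f ∈ H', f.card = k := fun f hf => hHcard f (hH'sub hf)
  have hucard : (Finset.univ : Finset (Fin n)).card = n := by
    rw [Finset.card_univ, Fintype.card_fin]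
  have hHsubK : H ⊆ K := by
    intro f hf
    rw [hK, mem_powersetCard]
    exact ⟨subset_univ f, hHcard f hf⟩
  have hKcard : K.card = n.choose k := by
    rw [hK, card_powersetCard, hucard]
  have hsupK : ∀ W : Finset (Fin n), W.card ≤ k →
      (K.filter (fun f => W ⊆ f)).card = (n - W.card).choose (k - W.card) := by
    intro W hW
    rw [hK, aux5_card_sup Finset.univ W k (subset_univ W) hW, hucard]
  have hsupK0 : ∀ W : Finset (Fin n), k < W.card → (K.filter (fun f => W ⊆ f)) = ∅ := by
    intro W hW
    refine filter_eq_empty_iff.2 ?_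
    intro f hf hWf
    rw [hK, mem_powersetCard] at hf
    have := card_le_card hWf
    omega
  -- missing edges bound
  have hMBcard : (MB.card : ℝ) ≤ α * (n.choose k : ℝ) := by
    have h1 : H.card ≤ K.card := card_le_card hHsubK
    have h2 : MB.card = K.card - H.card := by rw [hMB, card_sdiff_of_subset hHsubK]
    have h3 : (MB.card : ℝ) = (K.card : ℝ) - (H.card : ℝ) := by
      rw [h2]; push_cast [h1]; ring
    rw [h3, hKcard]
    linarith [hHsize]
  -- Good of empty set
  have hpowβ : ∀ a b : ℕ, a ≤ b → β ^ b ≤ β ^ a :=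
    fun a b h => pow_le_pow_of_le_one hβpos.le hβ1 h
  have hGood0 : GoodP ∅ := by
    simp only [hGoodP, card_empty, Nat.sub_zero]
    have h1 : Mf ∅ = MB.card := by
      rw [hMf]
      simp only
      rw [filter_true_of_mem (fun f _ => empty_subset f)]
    rw [h1, hγ]
    have h2 : α ≤ β ^ (2 * (k - 0)) := by
      rw [hαβ, hm]
      exact hpowβ (2*(k-0)) (4*k^2) (by have hkk : k ≤ k^2 := Nat.le_self_pow (by norm_num) k; omega)
    calc (MB.card : ℝ) ≤ α * (n.choose k : ℝ) := hMBcard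
    _ ≤ β ^ (2 * (k - 0)) * (n.choose k : ℝ) := by
        exact mul_le_mul_of_nonneg_right h2 (by positivity)
  -- F1: double counting
  have hF1 : ∀ (U : Finset (Fin n)) (j : ℕ), U.card ≤ j → j ≤ k →
      ∑ T ∈ (Finset.univ.powersetCard j).filter (fun T => U ⊆ T), (Mf T : ℝ)
        = ((k - U.card).choose (j - U.card) : ℝ) * (Mf U : ℝ) := by
    intro U j hUj hjk
    set A := (Finset.univ.powersetCard j).filter (fun T => U ⊆ T) with hA
    have hnat : ∑ T ∈ A, Mf T = (k - U.card).choose (j - U.card) * Mf U := by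
      have hdc : ∑ T ∈ A, Mf T = ∑ f ∈ MB, (A.filter (fun T => T ⊆ f)).card := by
        rw [hMf]
        exact aux5_double_count A MB
      have hin : ∀ f ∈ MB, (A.filter (fun T => T ⊆ f)).card
          = if U ⊆ f then (k - U.card).choose (j - U.card) else 0 := by
        intro f hf
        have hfK : f ∈ K := (mem_sdiff.1 (by rwa [hMB] at hf)).1
        have hfcard : f.card = k := (mem_powersetCard.1 (by rwa [hK] at hfK)).2
        by_cases hUf : U ⊆ f
        · rw [if_pos hUf]
          have heq : A.filter (fun T => T ⊆ f) = (f.powersetCard j).filter (fun T => U ⊆ T) := by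
            ext T
            simp only [hA, mem_filter, mem_powersetCard]
            constructor
            · rintro ⟨⟨⟨_, hTc⟩, hUT⟩, hTf⟩; exact ⟨⟨hTf, hTc⟩, hUT⟩
            · rintro ⟨⟨hTf, hTc⟩, hUT⟩; exact ⟨⟨⟨subset_univ _, hTc⟩, hUT⟩, hTf⟩
          rw [heq, aux5_card_sup f U j hUf hUj, hfcard]
        · rw [if_neg hUf]
          rw [card_eq_zero]
          refine filter_eq_empty_iff.2 ?_
          intro T hT hTf
          rw [hA, mem_filter] at hT
          exact hUf (hT.2.trans hTf)
      rw [hdc, Finset.sum_congr rfl hin, ← Finset.sum_filter, Finset.sum_const,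
        smul_eq_mul, hMf]
      ring
    calc ∑ T ∈ A, (Mf T : ℝ) = ((∑ T ∈ A, Mf T : ℕ) : ℝ) := by rw [Nat.cast_sum]
    _ = ((k - U.card).choose (j - U.card) : ℝ) * (Mf U : ℝ) := by rw [hnat]; push_cast; ring
  -- F2: crowding bound
  have hF2 : ∀ (U : Finset (Fin n)) (j : ℕ), GoodP U → U.card ≤ j → j ≤ k - 1 →
      (((badF j).filter (fun T => U ⊆ T)).card : ℝ) * (γ j * (n.choose (k - j) : ℝ))
        ≤ 2 ^ k * (γ U.card * (n.choose (k - U.card) : ℝ)) := by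
    intro U j hGU hUj hjk1
    have hjk : j ≤ k := by omega
    set BjU := (badF j).filter (fun T => U ⊆ T) with hBjU
    have hsubA : BjU ⊆ (Finset.univ.powersetCard j).filter (fun T => U ⊆ T) := by
      intro T hT
      rw [hBjU, hbadF, mem_filter, mem_filter] at hT
      rw [mem_filter]
      exact ⟨hT.1.1, hT.2⟩
    have hlow : ∀ T ∈ BjU, γ j * ((n.choose (k - j) : ℕ) : ℝ) ≤ (Mf T : ℝ) := by
      intro T hT
      rw [hBjU, hbadF, mem_filter, mem_filter] at hT
      have hTc : T.card = j := (mem_powersetCard.1 hT.1.1).2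
      have hbad := hT.1.2
      rw [hGoodP] at hbad
      simp only at hbad
      rw [hTc] at hbad
      exact (not_le.1 hbad).le
    have h1 : (BjU.card : ℝ) * (γ j * (n.choose (k - j) : ℝ)) ≤ ∑ T ∈ BjU, (Mf T : ℝ) := by
      have := Finset.card_nsmul_le_sum BjU (fun T => (Mf T : ℝ))
        (γ j * (n.choose (k - j) : ℝ)) hlow
      simpa [nsmul_eq_mul] using this
    have h2 : ∑ T ∈ BjU, (Mf T : ℝ)
        ≤ ∑ T ∈ (Finset.univ.powersetCard j).filter (fun T => U ⊆ T), (Mf T : ℝ) :=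
      Finset.sum_le_sum_of_subset_of_nonneg hsubA (fun _ _ _ => Nat.cast_nonneg _)
    rw [hF1 U j hUj hjk] at h2
    have h3 : ((k - U.card).choose (j - U.card) : ℝ) ≤ 2 ^ k := by
      have h4 : (k - U.card).choose (j - U.card) ≤ 2 ^ k :=
        (aux5_choose_le_two_pow _ _).trans (Nat.pow_le_pow_right (by norm_num) (by omega))
      exact_mod_cast h4
    have h5 : (Mf U : ℝ) ≤ γ U.card * (n.choose (k - U.card) : ℝ) := by
      rw [hGoodP] at hGU
      exact hGU
    calc (BjU.card : ℝ) * (γ j * (n.choose (k - j) : ℝ))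
        ≤ ((k - U.card).choose (j - U.card) : ℝ) * (Mf U : ℝ) := h1.trans h2
    _ ≤ 2 ^ k * (γ U.card * (n.choose (k - U.card) : ℝ)) := by
        have hMfnn : (0:ℝ) ≤ (Mf U : ℝ) := Nat.cast_nonneg _
        exact mul_le_mul h3 h5 hMfnn (by positivity : (0:ℝ) ≤ (2:ℝ)^k)
  -- F4: global bad count
  have hF4 : ∀ t : ℕ, 1 ≤ t → t ≤ k - 1 →
      ((badF t).card : ℝ) ≤ 2 ^ k * β ^ 2 * (n.choose t : ℝ) := by
    intro t ht1 htk
    have h0 := hF2 ∅ t hGood0 (by simp) htk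
    have heq : (badF t).filter (fun T => (∅ : Finset (Fin n)) ⊆ T) = badF t :=
      filter_true_of_mem (fun _ _ => empty_subset _)
    rw [heq] at h0
    simp only [card_empty, Nat.sub_zero] at h0
    -- C(n,k) ≤ C(n,t) * C(n,k-t)
    have hid := aux5_choose_id n t (k - t) (by omega)
    have htk' : t + (k - t) = k := by omega
    rw [htk'] at hid
    have hCC : (n.choose k : ℝ) ≤ (n.choose t : ℝ) * (n.choose (k - t) : ℝ) := by
      have h5 : n.choose k ≤ n.choose t * (n - t).choose (k - t) := by
        calc n.choose k = n.choose k * 1 := (mul_one _).symm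
        _ ≤ n.choose k * k.choose t := by
            exact Nat.mul_le_mul_left _ (Nat.choose_pos (by omega))
        _ = n.choose t * (n - t).choose (k - t) := hid.symm
      have h6 : (n - t).choose (k - t) ≤ n.choose (k - t) := Nat.choose_le_choose _ (by omega)
      exact_mod_cast h5.trans (Nat.mul_le_mul_left _ h6)
    have hγ0 : γ 0 = β ^ (2 * t) * γ t := by
      rw [hγ]
      simp only
      rw [← pow_add]
      congr 1
      omega
    have hβ2t : β ^ (2 * t) ≤ β ^ 2 := hpowβ 2 (2 * t) (by omega)
    have hCpos : (0:ℝ) < (n.choose (k - t) : ℝ) := by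
      exact_mod_cast Nat.choose_pos (show k - t ≤ n by omega)
    have hfac : (0:ℝ) < γ t * (n.choose (k - t) : ℝ) := by positivity
    apply le_of_mul_le_mul_right _ hfac
    calc ((badF t).card : ℝ) * (γ t * (n.choose (k - t) : ℝ))
        ≤ 2 ^ k * (γ 0 * (n.choose k : ℝ)) := h0
    _ = 2 ^ k * β ^ (2 * t) * γ t * (n.choose k : ℝ) := by rw [hγ0]; ring
    _ ≤ 2 ^ k * β ^ (2 * t) * γ t * ((n.choose t : ℝ) * (n.choose (k - t) : ℝ)) := by
        have : (0:ℝ) ≤ 2 ^ k * β ^ (2*t) * γ t := by positivity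
        exact mul_le_mul_of_nonneg_left hCC this
    _ = (2 ^ k * β ^ (2 * t) * (n.choose t : ℝ)) * (γ t * (n.choose (k - t) : ℝ)) := by ring
    _ ≤ (2 ^ k * β ^ 2 * (n.choose t : ℝ)) * (γ t * (n.choose (k - t) : ℝ)) := by
        have h7 : 2 ^ k * β ^ (2 * t) * (n.choose t : ℝ) ≤ 2 ^ k * β ^ 2 * (n.choose t : ℝ) := by
          have := mul_le_mul_of_nonneg_left hβ2t (by positivity : (0:ℝ) ≤ 2^k)
          exact mul_le_mul_of_nonneg_right this (by positivity)
        exact mul_le_mul_of_nonneg_right h7 hfac.le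
  -- the bad-set container for level i
  refine ⟨H', hH'sub, ?_⟩
  intro i hi1 hik
  set Dfin : Finset (Finset (Fin n)) :=
    (Finset.univ.powersetCard i).filter (fun S => ¬ cleanP S) with hDfin
  have hDcard : ((Dfin).card : ℝ) ≤ 2 ^ (3 * k) * β ^ 2 * (n.choose i : ℝ) := by
    have hsub : Dfin ⊆ (Finset.Icc 1 i).biUnion (fun t => (badF t).biUnion
        (fun T => (Finset.univ.powersetCard i).filter (fun S => T ⊆ S))) := by
      intro S hS
      rw [hDfin, mem_filter, mem_powersetCard] at hS
      obtain ⟨⟨hSu, hSc⟩, hncl⟩ := hS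
      simp only [hcleanP] at hncl
      push_neg at hncl
      obtain ⟨U, hU, h1, h2, h3⟩ := hncl
      have hUi : U.card ≤ i := hSc ▸ card_le_card (mem_powerset.1 hU)
      refine mem_biUnion.2 ⟨U.card, mem_Icc.2 ⟨h1, hUi⟩, mem_biUnion.2 ⟨U, ?_, ?_⟩⟩
      · rw [hbadF, mem_filter, mem_powersetCard]
        exact ⟨⟨subset_univ U, rfl⟩, h3⟩
      · rw [mem_filter, mem_powersetCard]
        exact ⟨⟨hSu, hSc⟩, mem_powerset.1 hU⟩
    have h1 : (Dfin.card : ℝ) ≤ ∑ t ∈ Finset.Icc 1 i, ∑ T ∈ badF t,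
        (((Finset.univ.powersetCard i).filter (fun S => T ⊆ S)).card : ℝ) := by
      have h2 := (card_le_card hsub).trans ((Finset.card_biUnion_le).trans
        (Finset.sum_le_sum (fun t _ => Finset.card_biUnion_le)))
      exact_mod_cast h2
    have h3 : ∀ t ∈ Finset.Icc 1 i, ∀ T ∈ badF t,
        (((Finset.univ.powersetCard i).filter (fun S => T ⊆ S)).card : ℝ)
          ≤ ((n - t).choose (i - t) : ℝ) := by
      intro t ht T hT
      rw [hbadF, mem_filter, mem_powersetCard] at hT
      have h4 := aux5_card_sup_le Finset.univ T i
      rw [hucard, hT.1.2] at h4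
      exact_mod_cast h4
    have h5 : ∀ t ∈ Finset.Icc 1 i,
        ∑ T ∈ badF t, (((Finset.univ.powersetCard i).filter (fun S => T ⊆ S)).card : ℝ)
          ≤ 2 ^ k * β ^ 2 * ((n.choose i : ℝ) * 2 ^ k) := by
      intro t ht
      rw [Finset.mem_Icc] at ht
      have htk : t ≤ k - 1 := by omega
      calc ∑ T ∈ badF t, (((Finset.univ.powersetCard i).filter (fun S => T ⊆ S)).card : ℝ)
          ≤ ∑ _T ∈ badF t, ((n - t).choose (i - t) : ℝ) :=
            Finset.sum_le_sum (h3 t (Finset.mem_Icc.2 ht))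
      _ = ((badF t).card : ℝ) * ((n - t).choose (i - t) : ℝ) := by
            rw [Finset.sum_const, nsmul_eq_mul]
      _ ≤ (2 ^ k * β ^ 2 * (n.choose t : ℝ)) * ((n - t).choose (i - t) : ℝ) :=
            mul_le_mul_of_nonneg_right (hF4 t ht.1 htk) (by positivity)
      _ = 2 ^ k * β ^ 2 * ((n.choose t : ℝ) * ((n - t).choose (i - t) : ℝ)) := by ring
      _ ≤ 2 ^ k * β ^ 2 * ((n.choose i : ℝ) * 2 ^ k) := by
          refine mul_le_mul_of_nonneg_left ?_ (by positivity)
          have hid := aux5_choose_id n t (i - t) (by omega)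
          have : t + (i - t) = i := by omega
          rw [this] at hid
          have h6 : i.choose t ≤ 2 ^ k :=
            (aux5_choose_le_two_pow _ _).trans (Nat.pow_le_pow_right (by norm_num) (by omega))
          have h7 : n.choose t * (n - t).choose (i - t) ≤ n.choose i * 2 ^ k := by
            rw [hid]
            exact Nat.mul_le_mul_left _ h6
          exact_mod_cast h7
    have h8 : (Dfin.card : ℝ) ≤ (i : ℝ) * (2 ^ k * β ^ 2 * ((n.choose i : ℝ) * 2 ^ k)) := by
      refine h1.trans ?_
      calc ∑ t ∈ Finset.Icc 1 i, ∑ T ∈ badF t,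
          (((Finset.univ.powersetCard i).filter (fun S => T ⊆ S)).card : ℝ)
          ≤ ∑ _t ∈ Finset.Icc 1 i, 2 ^ k * β ^ 2 * ((n.choose i : ℝ) * 2 ^ k) :=
            Finset.sum_le_sum h5
      _ = ((Finset.Icc 1 i).card : ℝ) * (2 ^ k * β ^ 2 * ((n.choose i : ℝ) * 2 ^ k)) := by
            rw [Finset.sum_const, nsmul_eq_mul]
      _ ≤ (i : ℝ) * (2 ^ k * β ^ 2 * ((n.choose i : ℝ) * 2 ^ k)) := by
            have : (Finset.Icc 1 i).card = i := by rw [Nat.card_Icc]; omega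
            rw [this]
    refine h8.trans ?_
    have hik2 : (i : ℝ) ≤ 2 ^ k := by
      have : i ≤ 2 ^ k := by
        have := Nat.lt_two_pow_self (n := k)
        omega
      exact_mod_cast this
    calc (i : ℝ) * (2 ^ k * β ^ 2 * ((n.choose i : ℝ) * 2 ^ k))
        ≤ (2:ℝ) ^ k * (2 ^ k * β ^ 2 * ((n.choose i : ℝ) * 2 ^ k)) :=
          mul_le_mul_of_nonneg_right hik2 (by positivity)
    _ = (2:ℝ) ^ (k + k + k) * β ^ 2 * (n.choose i : ℝ) := by
        rw [pow_add, pow_add]; ring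
    _ = 2 ^ (3 * k) * β ^ 2 * (n.choose i : ℝ) := by
        have h9 : k + k + k = 3 * k := by omega
        rw [h9]
  have hzero : ∀ S : Finset (Fin n), S.card = i → ¬ cleanP S → degT k H' S = 0 := by
    intro S hSc hncl
    simp only [hcleanP] at hncl
    push_neg at hncl
    obtain ⟨U, hUS, hU1, hUk, hUbad⟩ := hncl
    have hdeq : degT k H' S = (H'.filter (fun f => S ⊆ f)).card :=
      aux5_degT_eq k H' hH'card S (by omega)
    rw [hdeq, card_eq_zero]
    refine filter_eq_empty_iff.2 ?_
    intro f hf hSf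
    rw [hH', mem_filter] at hf
    have hcl := hf.2
    simp only [hcleanP] at hcl
    exact hUbad (hcl U (mem_powerset.2 ((mem_powerset.1 hUS).trans hSf)) hU1 hUk)
  have hgooddeg : ∀ S : Finset (Fin n), S.card = i → cleanP S →
      (1 - 2 * β) * (n.choose (k - i) : ℝ) ≤ (degT k H' S : ℝ) := by
    intro S hSc hcl
    simp only [hcleanP] at hcl
    have hki : 1 ≤ k - i := by omega
    have hCpos : (0:ℝ) < (n.choose (k - i) : ℝ) := by
      exact_mod_cast Nat.choose_pos (show k - i ≤ n by omega)
    set RS := H.filter (fun f => S ⊆ f ∧ ¬ cleanP f) with hRS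
    have hRScard : (RS.card : ℝ) ≤ 2 ^ (4*k+1) * β ^ 2 * (n.choose (k - i) : ℝ) := by
      have hRSsub : RS ⊆ (Finset.Icc 1 (k-1)).biUnion (fun j => S.powerset.biUnion (fun U =>
          ((badF j).filter (fun T => T ∩ S = U)).biUnion
            (fun T => K.filter (fun f => S ∪ T ⊆ f)))) := by
        intro f hf
        rw [hRS, mem_filter] at hf
        obtain ⟨hfH, hSf, hncl⟩ := hf
        simp only [hcleanP] at hncl
        push_neg at hncl
        obtain ⟨U, hUf, hU1, hUk, hUbad⟩ := hncl
        refine mem_biUnion.2 ⟨U.card, mem_Icc.2 ⟨hU1, hUk⟩, mem_biUnion.2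
          ⟨U ∩ S, mem_powerset.2 inter_subset_right, mem_biUnion.2 ⟨U, ?_, ?_⟩⟩⟩
        · rw [mem_filter, hbadF, mem_filter, mem_powersetCard]
          exact ⟨⟨⟨subset_univ U, rfl⟩, hUbad⟩, rfl⟩
        · rw [mem_filter]
          exact ⟨hHsubK hfH, union_subset hSf (mem_powerset.1 hUf)⟩
      have hstep : (RS.card : ℝ) ≤ ∑ j ∈ Finset.Icc 1 (k-1), ∑ U ∈ S.powerset,
          ∑ T ∈ (badF j).filter (fun T => T ∩ S = U),
            ((K.filter (fun f => S ∪ T ⊆ f)).card : ℝ) := by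
        have h2 := (card_le_card hRSsub).trans ((Finset.card_biUnion_le).trans
          (Finset.sum_le_sum (fun j _ => (Finset.card_biUnion_le).trans
            (Finset.sum_le_sum (fun U _ => Finset.card_biUnion_le)))))
        exact_mod_cast h2
      have hperm : ∀ j ∈ Finset.Icc 1 (k-1), ∀ U ∈ S.powerset,
          ∑ T ∈ (badF j).filter (fun T => T ∩ S = U),
            ((K.filter (fun f => S ∪ T ⊆ f)).card : ℝ)
            ≤ 2^(2*k+1) * β^2 * (n.choose (k-i) : ℝ) := by
        intro j hj U hU
        rw [Finset.mem_Icc] at hj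
        have hUS : U ⊆ S := mem_powerset.1 hU
        have hui : U.card ≤ i := hSc ▸ card_le_card hUS
        rcases Finset.eq_empty_or_nonempty ((badF j).filter (fun T => T ∩ S = U)) with he | hne
        · rw [he, Finset.sum_empty]; positivity
        obtain ⟨T₀, hT₀⟩ := hne
        rw [mem_filter] at hT₀
        have hT₀c : T₀.card = j := by
          have h3 := hT₀.1
          rw [hbadF, mem_filter, mem_powersetCard] at h3
          exact h3.1.2
        have hUT₀ : U ⊆ T₀ := by rw [← hT₀.2]; exact inter_subset_left
        have huj : U.card ≤ j := hT₀c ▸ card_le_card hUT₀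
        have hUgood : GoodP U := by
          rcases Nat.eq_zero_or_pos U.card with h0 | h0
          · rw [card_eq_zero.1 h0]; exact hGood0
          · exact hcl U hU h0 (by omega)
        have hult : U.card < j := by
          rcases lt_or_eq_of_le huj with h | h
          · exact h
          · exfalso
            have hTU : T₀ = U := (eq_of_subset_of_card_le hUT₀ (by omega)).symm
            have h4 := hT₀.1
            rw [hbadF, mem_filter] at h4
            exact h4.2 (hTU ▸ hUgood)
        have hcardST : ∀ T ∈ (badF j).filter (fun T => T ∩ S = U),
            (S ∪ T).card = i + j - U.card := by
          intro T hT
          rw [mem_filter] at hT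
          have hTc : T.card = j := by
            have h3 := hT.1
            rw [hbadF, mem_filter, mem_powersetCard] at h3
            exact h3.1.2
          have h1 := Finset.card_union_add_card_inter S T
          have h2 : S ∩ T = U := by rw [Finset.inter_comm]; exact hT.2
          rw [h2, hSc, hTc] at h1
          omega
        by_cases hm2 : k < i + j - U.card
        · have hz : ∀ T ∈ (badF j).filter (fun T => T ∩ S = U),
              ((K.filter (fun f => S ∪ T ⊆ f)).card : ℝ) = 0 := by
            intro T hT
            rw [hsupK0 (S ∪ T) (by rw [hcardST T hT]; omega), card_empty]
            norm_num
          rw [Finset.sum_eq_zero hz]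
          positivity
        · push_neg at hm2
          set u := U.card with hu
          set M := i + j - u with hM
          have hper : ∀ T ∈ (badF j).filter (fun T => T ∩ S = U),
              ((K.filter (fun f => S ∪ T ⊆ f)).card : ℝ) = (((n-M).choose (k-M) : ℕ) : ℝ) := by
            intro T hT
            have h5 := hsupK (S ∪ T) (by rw [hcardST T hT]; omega)
            rw [hcardST T hT] at h5
            rw [h5]
          rw [Finset.sum_congr rfl hper, Finset.sum_const, nsmul_eq_mul]
          have hcntle : ((badF j).filter (fun T => T ∩ S = U)).card
              ≤ ((badF j).filter (fun T => U ⊆ T)).card := by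
            apply card_le_card
            intro T hT
            rw [mem_filter] at hT ⊢
            exact ⟨hT.1, by rw [← hT.2]; exact inter_subset_left⟩
          have hF2' := hF2 U j hUgood huj (by omega)
          rw [← hu] at hF2'
          -- abbreviations
          set a : ℝ := (n.choose (k-j) : ℝ) with ha
          set b : ℝ := (n.choose (j-u) : ℝ) with hb
          set c2 : ℝ := (n.choose (k-M) : ℝ) with hc2
          set d : ℝ := (n.choose (k-u) : ℝ) with hd
          set E : ℝ := (n.choose (k-i) : ℝ) with hE
          set F : ℝ := (((n-(j-u)).choose (k-M) : ℕ) : ℝ) with hF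
          set G : ℝ := (((k-i).choose (j-u) : ℕ) : ℝ) with hG
          set P : ℝ := (((n-M).choose (k-M) : ℕ) : ℝ) with hP
          -- binomial facts
          have hstep2 : d ≤ a * b := by
            rw [hd, ha, hb]
            have hid1 := aux5_choose_id n (k-j) (j-u) (by omega)
            have heq1 : (k-j) + (j-u) = k-u := by omega
            rw [heq1] at hid1
            have h6 : n.choose (k-u) ≤ n.choose (k-j) * (n-(k-j)).choose (j-u) := by
              calc n.choose (k-u) = n.choose (k-u) * 1 := (mul_one _).symm
              _ ≤ n.choose (k-u) * (k-u).choose (k-j) :=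
                  Nat.mul_le_mul_left _ (Nat.choose_pos (by omega))
              _ = n.choose (k-j) * (n-(k-j)).choose (j-u) := hid1.symm
            have h7 : (n-(k-j)).choose (j-u) ≤ n.choose (j-u) :=
              Nat.choose_le_choose _ (by omega)
            exact_mod_cast h6.trans (Nat.mul_le_mul_left _ h7)
          have hid2R : b * F = E * G := by
            rw [hb, hF, hE, hG]
            have hid2 := aux5_choose_id n (j-u) (k-M) (by omega)
            have heq2 : (j-u) + (k-M) = k-i := by omega
            rw [heq2] at hid2
            exact_mod_cast hid2
          have hstep4 : c2 ≤ 2 * F := by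
            rw [hc2, hF]
            exact aux5_ratio n (j-u) (k-M) k (by omega) (by omega) hn2k
          have hGle : G ≤ 2^k := by
            rw [hG]
            have h8 : (k-i).choose (j-u) ≤ 2^k :=
              (aux5_choose_le_two_pow _ _).trans (Nat.pow_le_pow_right (by norm_num) (by omega))
            exact_mod_cast h8
          have hPc2 : P ≤ c2 := by
            rw [hP, hc2]
            exact_mod_cast Nat.choose_le_choose (k-M) (show n - M ≤ n by omega)
          have hγrel : γ u = β^(2*(j-u)) * γ j := by
            rw [hγ]
            simp only
            rw [← pow_add]
            congr 1
            omega
          have hγle : β^(2*(j-u)) ≤ β^2 := hpowβ 2 (2*(j-u)) (by omega)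
          have hapos : (0:ℝ) < a := by
            rw [ha]
            exact_mod_cast Nat.choose_pos (show k - j ≤ n by omega)
          have hEnn : (0:ℝ) ≤ E := by rw [hE]; positivity
          have hfac : (0:ℝ) < γ j * a := by positivity
          apply le_of_mul_le_mul_right _ hfac
          have hcnt2 : ((((badF j).filter (fun T => T ∩ S = U)).card : ℕ) : ℝ)
              ≤ (((badF j).filter (fun T => U ⊆ T)).card : ℝ) := by exact_mod_cast hcntle
          have hpp : (2:ℝ)^(k+1) * (2:ℝ)^k = (2:ℝ)^(2*k+1) := by
            rw [← pow_add]
            congr 1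
            omega
          calc ((((badF j).filter (fun T => T ∩ S = U)).card : ℕ) : ℝ) * P * (γ j * a)
              = ((((badF j).filter (fun T => T ∩ S = U)).card : ℕ) : ℝ) * (γ j * a) * P := by
                ring
          _ ≤ (((badF j).filter (fun T => U ⊆ T)).card : ℝ) * (γ j * a) * c2 := by
              have hq1 : ((((badF j).filter (fun T => T ∩ S = U)).card : ℕ) : ℝ) * (γ j * a)
                  ≤ (((badF j).filter (fun T => U ⊆ T)).card : ℝ) * (γ j * a) :=
                mul_le_mul_of_nonneg_right hcnt2 hfac.le
              have hPnn : (0:ℝ) ≤ P := by rw [hP]; positivity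
              exact mul_le_mul hq1 hPc2 hPnn (mul_nonneg (Nat.cast_nonneg _) hfac.le)
          _ ≤ (2^k * (γ u * d)) * c2 := by
              refine mul_le_mul_of_nonneg_right ?_ (by rw [hc2]; positivity)
              exact hF2'
          _ ≤ (2^k * (γ u * (a * b))) * c2 := by
              have hq2 : γ u * d ≤ γ u * (a * b) :=
                mul_le_mul_of_nonneg_left hstep2 (hγpos u).le
              refine mul_le_mul_of_nonneg_right ?_ (by rw [hc2]; positivity)
              exact mul_le_mul_of_nonneg_left hq2 (by positivity)
          _ ≤ (2^k * (γ u * (a * b))) * (2 * F) := by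
              refine mul_le_mul_of_nonneg_left hstep4 (by positivity)
          _ = (2:ℝ)^(k+1) * γ u * a * (b * F) := by ring
          _ = (2:ℝ)^(k+1) * γ u * a * (E * G) := by rw [hid2R]
          _ ≤ (2:ℝ)^(k+1) * γ u * a * (E * 2^k) := by
              refine mul_le_mul_of_nonneg_left ?_ (by positivity)
              exact mul_le_mul_of_nonneg_left hGle hEnn
          _ = β^(2*(j-u)) * ((2:ℝ)^(k+1) * (2:ℝ)^k * γ j * a * E) := by
              rw [hγrel]; ring
          _ ≤ β^2 * ((2:ℝ)^(k+1) * (2:ℝ)^k * γ j * a * E) := by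
              refine mul_le_mul_of_nonneg_right hγle ?_
              positivity
          _ = 2^(2*k+1) * β^2 * E * (γ j * a) := by rw [← hpp]; ring
      refine hstep.trans ?_
      have hsum1 : ∑ j ∈ Finset.Icc 1 (k-1), ∑ U ∈ S.powerset,
          ∑ T ∈ (badF j).filter (fun T => T ∩ S = U),
            ((K.filter (fun f => S ∪ T ⊆ f)).card : ℝ)
          ≤ ∑ _j ∈ Finset.Icc 1 (k-1), ∑ _U ∈ S.powerset,
            2^(2*k+1) * β^2 * (n.choose (k-i) : ℝ) :=
        Finset.sum_le_sum (fun j hj => Finset.sum_le_sum (fun U hU => hperm j hj U hU))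
      refine hsum1.trans ?_
      rw [Finset.sum_const, Finset.sum_const, smul_smul, nsmul_eq_mul]
      have hcard1 : ((Finset.Icc 1 (k-1)).card * S.powerset.card : ℕ) ≤ 2^k * 2^k := by
        have h1 : (Finset.Icc 1 (k-1)).card = k - 1 := by rw [Nat.card_Icc]; omega
        have h2 : S.powerset.card = 2^i := by rw [card_powerset, hSc]
        rw [h1, h2]
        have h3 : k - 1 ≤ 2^k := by
          have := Nat.lt_two_pow_self (n := k)
          omega
        exact Nat.mul_le_mul h3 (Nat.pow_le_pow_right (by norm_num) (by omega))
      have hcast : (((Finset.Icc 1 (k-1)).card * S.powerset.card : ℕ) : ℝ)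
          ≤ (2:ℝ)^k * 2^k := by exact_mod_cast hcard1
      calc (((Finset.Icc 1 (k-1)).card * S.powerset.card : ℕ) : ℝ)
          * (2^(2*k+1) * β^2 * (n.choose (k-i) : ℝ))
          ≤ ((2:ℝ)^k * 2^k) * (2^(2*k+1) * β^2 * (n.choose (k-i) : ℝ)) := by
            refine mul_le_mul_of_nonneg_right hcast (by positivity)
      _ = ((2:ℝ)^k * 2^k * 2^(2*k+1)) * β^2 * (n.choose (k-i) : ℝ) := by ring
      _ = 2^(4*k+1) * β^2 * (n.choose (k-i) : ℝ) := by
          rw [← pow_add, ← pow_add]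
          have : k + k + (2*k+1) = 4*k+1 := by omega
          rw [this]
    have hdeq : degT k H' S = (H'.filter (fun f => S ⊆ f)).card :=
      aux5_degT_eq k H' hH'card S (by omega)
    have hcover : K.filter (fun f => S ⊆ f)
        ⊆ (MB.filter (fun f => S ⊆ f) ∪ H'.filter (fun f => S ⊆ f)) ∪ RS := by
      intro f hf
      rw [mem_filter] at hf
      rw [mem_union, mem_union]
      by_cases hfH : f ∈ H
      · by_cases hfc : cleanP f
        · left; right; rw [hH', mem_filter, mem_filter]; exact ⟨⟨hfH, hfc⟩, hf.2⟩
        · right; rw [hRS, mem_filter]; exact ⟨hfH, hf.2, hfc⟩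
      · left; left; rw [mem_filter, hMB, mem_sdiff]; exact ⟨⟨hf.1, hfH⟩, hf.2⟩
    have hcount : (((n-i).choose (k-i) : ℕ) : ℝ)
        ≤ (Mf S : ℝ) + (degT k H' S : ℝ) + (RS.card : ℝ) := by
      have h1 : (K.filter (fun f => S ⊆ f)).card = (n-i).choose (k-i) := by
        have := hsupK S (by omega)
        rwa [hSc] at this
      have h2 := (card_le_card hcover).trans ((card_union_le _ _).trans
        (add_le_add_left (card_union_le _ _) _))
      rw [h1] at h2
      rw [hdeq, hMf]
      exact_mod_cast h2
    have hratio : (1 - β/2) * (n.choose (k-i):ℝ) ≤ (((n-i).choose (k-i) : ℕ):ℝ) := by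
      have ht := aux5_tel n (k-i) hki i
      have habs := aux5_abs n (k-i) (by omega) hki
      have htR : (n.choose (k-i):ℝ) ≤ (((n-i).choose (k-i) : ℕ):ℝ)
          + (i:ℝ) * (((n-1).choose (k-i-1) : ℕ):ℝ) := by exact_mod_cast ht
      have habsR : (n:ℝ) * (((n-1).choose (k-i-1) : ℕ):ℝ)
          = (n.choose (k-i):ℝ) * (((k-i:ℕ)):ℝ) := by exact_mod_cast habs
      have hnpos : (0:ℝ) < (n:ℝ) := by exact_mod_cast (show 0 < n by omega)
      have hmain : (i:ℝ) * (((n-1).choose (k-i-1) : ℕ):ℝ) ≤ (β/2) * (n.choose (k-i):ℝ) := by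
        have hi' : (i:ℝ) ≤ (k:ℝ) := by exact_mod_cast (show i ≤ k by omega)
        have hki2 : (((k-i:ℕ)):ℝ) ≤ (k:ℝ) := by exact_mod_cast (show k - i ≤ k by omega)
        have h3 : (i:ℝ) * (((k-i:ℕ)):ℝ) * 2 ≤ β * n := by
          have h4 : (i:ℝ) * (((k-i:ℕ)):ℝ) * 2 ≤ 2*(k:ℝ)^2 := by
            have hinn : (0:ℝ) ≤ (i:ℝ) := by positivity
            have hknn : (0:ℝ) ≤ (((k-i:ℕ)):ℝ) := by positivity
            nlinarith
          linarith [hnβ]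
        have h5 : (i:ℝ) * ((n:ℝ) * (((n-1).choose (k-i-1) : ℕ):ℝ))
            = (i:ℝ) * ((n.choose (k-i):ℝ) * (((k-i:ℕ)):ℝ)) := by rw [habsR]
        have hprodnn : (0:ℝ) ≤ (i:ℝ) * (((n-1).choose (k-i-1) : ℕ):ℝ) := by positivity
        nlinarith [h5, mul_le_mul_of_nonneg_right h3 hCpos.le, hnpos, hprodnn]
      linarith [htR, hmain]
    have hSgood := hcl S (mem_powerset_self S) (by omega) (by omega)
    simp only [hGoodP] at hSgood
    rw [hSc] at hSgood
    have hMfS : (Mf S : ℝ) ≤ β^2 * (n.choose (k-i):ℝ) := by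
      have hγi : γ i ≤ β^2 := by
        rw [hγ]
        exact hpowβ 2 (2*(k-i)) (by omega)
      calc (Mf S:ℝ) ≤ γ i * (n.choose (k-i):ℝ) := hSgood
      _ ≤ β^2 * (n.choose (k-i):ℝ) := mul_le_mul_of_nonneg_right hγi hCpos.le
    have h2p2 : (2:ℝ)^(4*k+2) * β ≤ 1 :=
      le_trans (mul_le_mul_of_nonneg_right (h2p (4*k+2) (5*k+2) (by omega)) hβpos.le) hβC
    have hpowrel : (2:ℝ)^(4*k+2) = 2*(2:ℝ)^(4*k+1) := by
      rw [pow_succ]; ring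
    have e1 : (2:ℝ)^(4*k+1) * β^2 ≤ β/2 := by
      nlinarith [mul_le_mul_of_nonneg_right h2p2 hβpos.le, hpowrel]
    have e2 : β^2 ≤ β/2 := by nlinarith [hβ2, hβpos.le]
    nlinarith [hcount, hratio, hMfS, hRScard, hCpos.le,
      mul_le_mul_of_nonneg_right e1 hCpos.le, mul_le_mul_of_nonneg_right e2 hCpos.le,
      mul_nonneg hβpos.le hCpos.le]
  have hfincard : Fintype.card (Fin n) = n := Fintype.card_fin n
  constructor
  · -- condition 1
    rw [hfincard]
    have hsub : {S : Finset (Fin n) | S.card = i ∧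
        (degT k H' S : ℝ) < (1 - 2 * β) * ((n).choose (k - i) : ℝ)}
        ⊆ (Dfin : Set (Finset (Fin n))) := by
      intro S hS
      simp only [Set.mem_setOf_eq] at hS
      rw [hDfin]
      simp only [coe_filter, mem_powersetCard, Set.mem_setOf_eq]
      refine ⟨⟨subset_univ S, hS.1⟩, ?_⟩
      intro hcl
      have := hgooddeg S hS.1 hcl
      linarith [hS.2]
    have h1 : ({S : Finset (Fin n) | S.card = i ∧
        (degT k H' S : ℝ) < (1 - 2 * β) * ((n).choose (k - i) : ℝ)}.ncard : ℝ)
        ≤ (Dfin.card : ℝ) := by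
      have := Set.ncard_le_ncard hsub (Dfin.finite_toSet)
      rw [Set.ncard_coe_finset] at this
      exact_mod_cast this
    refine h1.trans (hDcard.trans ?_)
    have hkey : (2:ℝ) ^ (3 * k) * β ≤ 2 := by
      have h1 : (2:ℝ) ^ (3*k) * β ≤ (2:ℝ) ^ (5*k+2) * β :=
        mul_le_mul_of_nonneg_right (h2p (3*k) (5*k+2) (by omega)) hβpos.le
      linarith [h1.trans hβC]
    calc (2:ℝ) ^ (3*k) * β^2 * (n.choose i : ℝ)
        = ((2:ℝ)^(3*k)*β) * (β * (n.choose i:ℝ)) := by ring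
    _ ≤ 2 * (β * (n.choose i:ℝ)) :=
        mul_le_mul_of_nonneg_right hkey (by positivity)
    _ = 2 * β * (n.choose i:ℝ) := by ring
  · -- condition 2
    intro S hS hdeg
    rw [hfincard] at hdeg
    by_cases hcl : cleanP S
    · exact absurd hdeg (not_lt.2 (hgooddeg S hS hcl))
    · exact hzero S hS hcl
end

section
/- Let k ≥ 3 and let P be a k-uniform tight path. If X and Y partition V(P) and every edge e of P satisfies |e ∩ Y| ≥ 2, then 2(|X| − (k−1)) ≤ (k−2)·|Y|. -/
open Finset

/-- Let `k ≥ 3` and let `P` be a `k`-uniform tight path, given by a linear ordering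
`f 0, f 1, …, f (m-1)` of its vertex set (with edges exactly the sets of `k` consecutive
vertices). If `X` and `Y` partition `V(P)` and every edge `e` of `P` satisfies `|e ∩ Y| ≥ 2`,
then `2(|X| - (k-1)) ≤ (k-2)|Y|`. -/

theorem stmt6 (k : ℕ) (hk : 3 ≤ k) (n m : ℕ) (f : ℕ → Fin n)
    (hinj : ∀ i j, i < m → j < m → f i = f j → i = j)
    (X Y : Finset (Fin n))
    (hdisj : Disjoint X Y)
    (hpart : X ∪ Y = (Finset.range m).image f)
    (hedge : ∀ i, i + k ≤ m → 2 ≤ ((((Finset.Ico i (i + k)).image f)) ∩ Y).card) :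
    2 * ((X.card : ℤ) - ((k : ℤ) - 1)) ≤ ((k : ℤ) - 2) * (Y.card : ℤ) := by
  have hinjOn : Set.InjOn f (Finset.range m : Set ℕ) := by
    intro a ha b hb hab
    simp only [coe_range, Set.mem_Iio] at ha hb
    exact hinj a b ha hb hab
  have hcard : X.card + Y.card = m := by
    rw [← card_union_of_disjoint hdisj, hpart, Finset.card_image_of_injOn hinjOn,
      card_range]
  by_cases hm : m < k
  · have hX : X.card ≤ m := by omega
    have hk' : (3 : ℤ) ≤ (k : ℤ) := by exact_mod_cast hk
    have hX' : (X.card : ℤ) ≤ (m : ℤ) := by exact_mod_cast hX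
    have hm' : (m : ℤ) < (k : ℤ) := by exact_mod_cast hm
    nlinarith [Int.natCast_nonneg Y.card]
  push_neg at hm
  set N := m - k + 1 with hN
  -- each edge has at least 2 Y-indices
  have h1 : ∀ i ∈ range N, 2 ≤ ((Ico i (i + k)).filter (fun j => f j ∈ Y)).card := by
    intro i hi
    simp only [mem_range, hN] at hi
    have hik : i + k ≤ m := by omega
    have h2 := hedge i hik
    have hsub : ((Finset.Ico i (i + k)).image f) ∩ Y
        ⊆ ((Ico i (i + k)).filter (fun j => f j ∈ Y)).image f := by
      intro x hx
      simp only [mem_inter, mem_image, mem_filter] at hx ⊢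
      obtain ⟨⟨j, hj, hjx⟩, hxY⟩ := hx
      exact ⟨j, ⟨hj, by simpa [hjx]⟩, hjx⟩
    calc 2 ≤ (((Finset.Ico i (i + k)).image f) ∩ Y).card := h2
      _ ≤ (((Ico i (i + k)).filter (fun j => f j ∈ Y)).image f).card := card_le_card hsub
      _ ≤ ((Ico i (i + k)).filter (fun j => f j ∈ Y)).card := card_image_le
  have hsum1 : 2 * N ≤ ∑ i ∈ range N, ((Ico i (i + k)).filter (fun j => f j ∈ Y)).card := by
    calc 2 * N = ∑ _i ∈ range N, 2 := by rw [sum_const, card_range, smul_eq_mul, mul_comm]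
      _ ≤ _ := sum_le_sum h1
  -- rewrite each term as a sum over range m
  have hstep : ∀ i ∈ range N, ((Ico i (i + k)).filter (fun j => f j ∈ Y)).card
      = ∑ j ∈ range m, if j ∈ Ico i (i + k) then (if f j ∈ Y then 1 else 0) else 0 := by
    intro i hi
    simp only [mem_range, hN] at hi
    have hik : i + k ≤ m := by omega
    rw [Finset.sum_ite_mem]
    have heq : range m ∩ Ico i (i + k) = Ico i (i + k) := by
      apply inter_eq_right.mpr
      intro j hj
      simp only [mem_Ico] at hj
      simp only [mem_range]; omega
    rw [heq, card_filter]
  have hinner : ∀ j ∈ range m,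
      (∑ i ∈ range N, if j ∈ Ico i (i + k) then (if f j ∈ Y then 1 else 0) else 0)
        ≤ k * (if f j ∈ Y then 1 else 0) := by
    intro j _
    rw [← Finset.sum_filter]
    rw [Finset.sum_const, smul_eq_mul]
    have hsub : (range N).filter (fun i => j ∈ Ico i (i + k)) ⊆ Ico (j + 1 - k) (j + 1) := by
      intro i hi
      simp only [mem_filter, mem_Ico, mem_range] at hi
      simp only [mem_Ico]; omega
    have hc : ((range N).filter (fun i => j ∈ Ico i (i + k))).card ≤ k := by
      calc _ ≤ (Ico (j + 1 - k) (j + 1)).card := card_le_card hsub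
        _ ≤ k := by rw [Nat.card_Ico]; omega
    exact Nat.mul_le_mul_right _ hc
  have hsum3 : ((range m).filter (fun j => f j ∈ Y)).card ≤ Y.card := by
    apply Finset.card_le_card_of_injOn f
    · intro j hj
      simp only [coe_filter, Set.mem_setOf_eq, mem_filter] at hj
      exact hj.2
    · intro a ha b hb hab
      simp only [coe_filter, Set.mem_setOf_eq, mem_range] at ha hb
      exact hinj a b ha.1 hb.1 hab
  have key : 2 * N ≤ k * Y.card := by
    calc 2 * N ≤ ∑ i ∈ range N, ((Ico i (i + k)).filter (fun j => f j ∈ Y)).card := hsum1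
      _ = ∑ i ∈ range N, ∑ j ∈ range m,
            (if j ∈ Ico i (i + k) then (if f j ∈ Y then 1 else 0) else 0) :=
          sum_congr rfl hstep
      _ = ∑ j ∈ range m, ∑ i ∈ range N,
            (if j ∈ Ico i (i + k) then (if f j ∈ Y then 1 else 0) else 0) := sum_comm
      _ ≤ ∑ j ∈ range m, k * (if f j ∈ Y then 1 else 0) := sum_le_sum hinner
      _ = k * ∑ j ∈ range m, (if f j ∈ Y then 1 else 0) := by rw [mul_sum]
      _ = k * ((range m).filter (fun j => f j ∈ Y)).card := by rw [card_filter]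
      _ ≤ k * Y.card := Nat.mul_le_mul_left _ hsum3
  have hNZ : (N : ℤ) = (m : ℤ) - (k : ℤ) + 1 := by
    rw [hN]; push_cast [Nat.cast_sub hm]; ring
  have key' : 2 * ((m : ℤ) - (k : ℤ) + 1) ≤ (k : ℤ) * (Y.card : ℤ) := by
    rw [← hNZ]; exact_mod_cast key
  have hcard' : (X.card : ℤ) + (Y.card : ℤ) = (m : ℤ) := by exact_mod_cast hcard
  linarith
end

section
/- Let 0 < β ≤ 1/6, let n be a positive integer, and let F be a 2-edge-coloured graph with |V(F)| ≤ n and minimum degree δ(F) ≥ (1−β)n. Then there exists S ⊆ V(F) with |S| ≥ (1−β)n such that the induced subgraph F[S] has minimum degree at least (1−2β)n and there is a colour c ∈ {red, blue} such that the subgraph of colour-c edges of F[S] is connected and every vertex of S is incident to a colour-c edge inside S. -/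
open Finset

lemma stmt10_nbr_in {V : Type} [Fintype V] [DecidableEq V] (F : SimpleGraph V)
    [DecidableRel F.Adj] (v : V) (T : Finset V)
    (h : Fintype.card V < F.degree v + T.card) :
    ∃ u ∈ T, F.Adj v u := by
  have h1 : (F.neighborFinset v ∩ T).card + (F.neighborFinset v ∪ T).card
      = F.degree v + T.card := by
    rw [Finset.card_inter_add_card_union, SimpleGraph.card_neighborFinset_eq_degree]
  have h2 : (F.neighborFinset v ∪ T).card ≤ Fintype.card V := Finset.card_le_univ _
  have h3 : 0 < (F.neighborFinset v ∩ T).card := by omega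
  obtain ⟨u, hu⟩ := Finset.card_pos.mp h3
  rw [Finset.mem_inter, SimpleGraph.mem_neighborFinset] at hu
  exact ⟨u, hu.2, hu.1⟩

/-- Let `0 < β ≤ 1/6`, `n ≥ 1`, and let `F` be a 2-edge-coloured graph (`col` gives the
colour of each edge, `true` = red) with `|V(F)| ≤ n` and minimum degree `δ(F) ≥ (1-β)n`.
Then there is `S ⊆ V(F)` with `|S| ≥ (1-β)n` such that the induced subgraph `F[S]` has
minimum degree at least `(1-2β)n` and for some colour `c` the subgraph of colour-`c` edges of
`F[S]` is connected and every vertex of `S` is incident to a colour-`c` edge inside `S`. -/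
theorem stmt10 {V : Type} [Fintype V] [DecidableEq V]
    (β : ℝ) (hβ0 : 0 < β) (hβ : β ≤ 1 / 6) (n : ℕ) (hn : 0 < n)
    (F : SimpleGraph V) [DecidableRel F.Adj]
    (col : V → V → Bool) (hsym : ∀ u v, col u v = col v u)
    (hV : Fintype.card V ≤ n)
    (hδ : (1 - β) * n ≤ (F.minDegree : ℝ)) :
    ∃ (S : Finset V) (c : Bool),
      (1 - β) * n ≤ (S.card : ℝ) ∧
      (∀ v ∈ S, (1 - 2 * β) * n ≤ (((F.neighborFinset v) ∩ S).card : ℝ)) ∧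
      (∀ u ∈ S, ∀ v ∈ S,
        Relation.ReflTransGen (fun a b => a ∈ S ∧ b ∈ S ∧ F.Adj a b ∧ col a b = c) u v) ∧
      (∀ v ∈ S, ∃ u ∈ S, F.Adj v u ∧ col v u = c) := by
  classical
  have hb1 : (5:ℝ)/6 ≤ 1 - β := by linarith
  have hn' : (1:ℝ) ≤ n := by exact_mod_cast hn
  have hpos : (0:ℝ) < (1 - β) * n := by nlinarith
  -- V is nonempty
  have hne : Nonempty V := by
    by_contra h
    have hie : IsEmpty V := not_nonempty_iff.mp h
    have h0 : F.minDegree = 0 := by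
      simp [SimpleGraph.minDegree, Finset.univ_eq_empty]
    rw [h0] at hδ
    simp at hδ
    linarith
  obtain ⟨x⟩ := hne
  set N := Fintype.card V with hN
  have hdeg : ∀ v : V, (1 - β) * n ≤ (F.degree v : ℝ) := fun v =>
    le_trans hδ (by exact_mod_cast F.minDegree_le_degree v)
  have hdegN : ∀ v : V, F.degree v < N := fun v => F.degree_lt_card_verts v
  have hNn : (N : ℝ) ≤ n := by exact_mod_cast hV
  have hNlb : (1 - β) * n ≤ (N : ℝ) :=
    le_trans (hdeg x) (by exact_mod_cast (hdegN x).le)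
  -- majority colour at x
  have hsplit : ((F.neighborFinset x).filter (fun y => col x y = true)).card
      + ((F.neighborFinset x).filter (fun y => col x y = false)).card = F.degree x := by
    have h := Finset.card_filter_add_card_filter_not
      (s := F.neighborFinset x) (p := fun y => col x y = true)
    simpa [Bool.not_eq_true, SimpleGraph.card_neighborFinset_eq_degree] using h
  obtain ⟨c, hc2⟩ : ∃ c : Bool,
      F.degree x ≤ 2 * ((F.neighborFinset x).filter (fun y => col x y = c)).card := by
    rcases le_total (((F.neighborFinset x).filter (fun y => col x y = false)).card)
        (((F.neighborFinset x).filter (fun y => col x y = true)).card) with h | h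
    · exact ⟨true, by omega⟩
    · exact ⟨false, by omega⟩
  set A : Finset V := (F.neighborFinset x).filter (fun y => col x y = c) with hA
  have hAcard : (1 - β) * n ≤ 2 * (A.card : ℝ) := by
    have := hdeg x
    have h2 : (F.degree x : ℝ) ≤ 2 * A.card := by exact_mod_cast hc2
    linarith
  -- the colour-c component of x
  set r : V → V → Prop := fun a b => F.Adj a b ∧ col a b = c with hr
  have hrsymm : Symmetric r := fun a b hab => ⟨hab.1.symm, by rw [hsym]; exact hab.2⟩
  set C : Finset V := univ.filter (fun y => Relation.ReflTransGen r x y) with hC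
  have hmemC : ∀ y, y ∈ C ↔ Relation.ReflTransGen r x y := by
    intro y; simp [hC]
  have hxC : x ∈ C := (hmemC x).mpr Relation.ReflTransGen.refl
  have hclosed : ∀ a ∈ C, ∀ b, r a b → b ∈ C := by
    intro a ha b hab
    rw [hmemC] at ha ⊢
    exact ha.tail hab
  have hAC : ∀ y ∈ A, y ∈ C := by
    intro y hy
    rw [hA, mem_filter, SimpleGraph.mem_neighborFinset] at hy
    exact hclosed x hxC y ⟨hy.1, hy.2⟩
  have hCsize : A.card + 1 ≤ C.card := by
    have hxnot : x ∉ A := by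
      simp [hA, SimpleGraph.mem_neighborFinset]
    have hsub : insert x A ⊆ C := by
      intro y hy
      rcases Finset.mem_insert.mp hy with h | h
      · exact h ▸ hxC
      · exact hAC y h
    have h1 := Finset.card_le_card hsub
    rw [Finset.card_insert_of_notMem hxnot] at h1
    omega
  have hClb : (1 - β) * n / 2 + 1 ≤ (C.card : ℝ) := by
    have : (A.card : ℝ) + 1 ≤ C.card := by exact_mod_cast hCsize
    linarith
  -- every vertex of C has a c-edge inside C
  have hCinc : ∀ u ∈ C, ∃ w ∈ C, r u w := by
    intro u hu
    rw [hmemC] at hu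
    rcases Relation.ReflTransGen.cases_tail hu with h | ⟨w, hw, hwu⟩
    · subst h
      have hA0 : 0 < A.card := by
        by_contra h
        push_neg at h
        have h0 : A.card = 0 := Nat.le_zero.mp h
        rw [h0] at hAcard
        norm_num at hAcard
        linarith
      obtain ⟨y, hy⟩ := Finset.card_pos.mp hA0
      refine ⟨y, hAC y hy, ?_⟩
      rw [hA, mem_filter, SimpleGraph.mem_neighborFinset] at hy
      exact ⟨hy.1, hy.2⟩
    · exact ⟨w, (hmemC w).mpr hw, hrsymm hwu⟩
  -- reachability stays in C
  have hreachC : ∀ u ∈ C, ∀ v, Relation.ReflTransGen r u v → v ∈ C := by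
    intro u hu v hv
    induction hv with
    | refl => exact hu
    | tail p e ih => exact hclosed _ ih _ e
  have hCpath : ∀ u ∈ C, ∀ v, Relation.ReflTransGen r u v →
      Relation.ReflTransGen (fun a b => a ∈ C ∧ b ∈ C ∧ F.Adj a b ∧ col a b = c) u v := by
    intro u hu v hv
    induction hv with
    | refl => exact Relation.ReflTransGen.refl
    | @tail b w p e ih =>
      have hb : b ∈ C := hreachC u hu b p
      exact ih.tail ⟨hb, hclosed b hb w e, e.1, e.2⟩
  set D : Finset V := univ \ C with hD
  have hDC : D.card + C.card = N := Finset.card_sdiff_add_card_eq_card (Finset.subset_univ C)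
  have hDCr : (D.card : ℝ) + C.card = N := by exact_mod_cast hDC
  by_cases hcase : (D.card : ℝ) ≤ (N : ℝ) - (1 - β) * n
  · -- Case 1 : the component C works with colour c
    refine ⟨C, c, by linarith, ?_, ?_, ?_⟩
    · intro v hv
      have hsub : F.neighborFinset v ⊆ (F.neighborFinset v ∩ C) ∪ D := by
        intro y hy
        by_cases hyC : y ∈ C
        · exact Finset.mem_union_left _ (Finset.mem_inter.mpr ⟨hy, hyC⟩)
        · exact Finset.mem_union_right _ (by simp [hD, hyC])
      have h1 : F.degree v ≤ (F.neighborFinset v ∩ C).card + D.card := by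
        calc F.degree v = (F.neighborFinset v).card :=
              (SimpleGraph.card_neighborFinset_eq_degree _ _).symm
          _ ≤ ((F.neighborFinset v ∩ C) ∪ D).card := Finset.card_le_card hsub
          _ ≤ _ := Finset.card_union_le _ _
      have h1r : (F.degree v : ℝ) ≤ ((F.neighborFinset v ∩ C).card : ℝ) + D.card := by
        exact_mod_cast h1
      have := hdeg v
      linarith
    · intro u hu v hv
      have hu' := (hmemC u).mp hu
      have hv' := (hmemC v).mp hv
      exact hCpath u hu v ((by haveI : Std.Symm r := ⟨hrsymm⟩; exact Std.Symm.symm _ _ hu' : Relation.ReflTransGen r u x).trans hv')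
    · intro v hv
      obtain ⟨w, hwC, hw⟩ := hCinc v hv
      exact ⟨w, hwC, hw.1, hw.2⟩
  · -- Case 2 : take S = all vertices with the other colour
    push_neg at hcase
    have hblue : ∀ a ∈ C, ∀ b ∈ D, F.Adj a b → col a b = !c := by
      intro a ha b hb hab
      have hbC : b ∉ C := by
        rw [hD, Finset.mem_sdiff] at hb; exact hb.2
      have : col a b ≠ c := fun h => hbC (hclosed a ha b ⟨hab, h⟩)
      cases hcol : col a b <;> cases c <;> simp_all
    have hCtoD : ∀ v ∈ C, ∃ u ∈ D, F.Adj v u ∧ col v u = !c := by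
      intro v hv
      have hlt : N < F.degree v + D.card := by
        have : (N : ℝ) < (F.degree v : ℝ) + D.card := by
          have := hdeg v; linarith
        exact_mod_cast this
      obtain ⟨u, huD, hadj⟩ := stmt10_nbr_in F v D hlt
      exact ⟨u, huD, hadj, hblue v hv u huD hadj⟩
    have hDtoC : ∀ v ∈ D, ∃ u ∈ C, F.Adj v u ∧ col v u = !c := by
      intro v hv
      have hlt : N < F.degree v + C.card := by
        have : (N : ℝ) < (F.degree v : ℝ) + C.card := by
          have h1 := hdeg v
          nlinarith
        exact_mod_cast this
      obtain ⟨u, huC, hadj⟩ := stmt10_nbr_in F v C hlt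
      refine ⟨u, huC, hadj, ?_⟩
      rw [hsym]
      exact hblue u huC v hv hadj.symm
    have hDD : ∀ d1 ∈ D, ∀ d2 ∈ D, ∃ w ∈ C, F.Adj d1 w ∧ F.Adj d2 w := by
      intro d1 hd1 d2 hd2
      set X : Finset V := F.neighborFinset d1 ∩ F.neighborFinset d2 with hX
      have h1 : X.card + (F.neighborFinset d1 ∪ F.neighborFinset d2).card
          = F.degree d1 + F.degree d2 := by
        rw [hX, Finset.card_inter_add_card_union]
        simp [SimpleGraph.card_neighborFinset_eq_degree]
      have h2 : (F.neighborFinset d1 ∪ F.neighborFinset d2).card ≤ N :=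
        Finset.card_le_univ _
      have hsub : X ⊆ (X ∩ C) ∪ D := by
        intro y hy
        by_cases hyC : y ∈ C
        · exact Finset.mem_union_left _ (Finset.mem_inter.mpr ⟨hy, hyC⟩)
        · exact Finset.mem_union_right _ (by simp [hD, hyC])
      have h3 : X.card ≤ (X ∩ C).card + D.card :=
        le_trans (Finset.card_le_card hsub) (Finset.card_union_le _ _)
      have h4 : N + D.card < F.degree d1 + F.degree d2 := by
        have : (N : ℝ) + D.card < (F.degree d1 : ℝ) + F.degree d2 := by
          have ha := hdeg d1
          have hb := hdeg d2
          nlinarith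
        exact_mod_cast this
      have h5 : 0 < (X ∩ C).card := by omega
      obtain ⟨w, hw⟩ := Finset.card_pos.mp h5
      rw [Finset.mem_inter, hX, Finset.mem_inter,
        SimpleGraph.mem_neighborFinset, SimpleGraph.mem_neighborFinset] at hw
      exact ⟨w, hw.2, hw.1.1, hw.1.2⟩
    refine ⟨univ, !c, ?_, ?_, ?_, ?_⟩
    · rw [Finset.card_univ]; exact hNlb
    · intro v hv
      rw [Finset.inter_univ, SimpleGraph.card_neighborFinset_eq_degree]
      have h1 := hdeg v
      have h2 : (0:ℝ) ≤ β * n := by positivity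
      linarith
    · set r2 : V → V → Prop :=
        fun a b => a ∈ (univ : Finset V) ∧ b ∈ (univ : Finset V) ∧ F.Adj a b ∧ col a b = !c
        with hr2
      have hstep : ∀ a b, F.Adj a b → col a b = !c → Relation.ReflTransGen r2 a b := by
        intro a b h1 h2
        exact Relation.ReflTransGen.single ⟨mem_univ a, mem_univ b, h1, h2⟩
      have hr2symm : Symmetric r2 := by
        intro a b h
        exact ⟨mem_univ b, mem_univ a, h.2.2.1.symm, by rw [hsym]; exact h.2.2.2⟩
      have htouch : ∀ u : V, ∃ d ∈ D, Relation.ReflTransGen r2 u d := by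
        intro u
        by_cases hu : u ∈ C
        · obtain ⟨d, hdD, hadj, hcol⟩ := hCtoD u hu
          exact ⟨d, hdD, hstep u d hadj hcol⟩
        · exact ⟨u, by simp [hD, hu], Relation.ReflTransGen.refl⟩
      have hDconn : ∀ d1 ∈ D, ∀ d2 ∈ D, Relation.ReflTransGen r2 d1 d2 := by
        intro d1 hd1 d2 hd2
        obtain ⟨w, hwC, h1, h2⟩ := hDD d1 hd1 d2 hd2
        have e1 : col d1 w = !c := by
          rw [hsym]; exact hblue w hwC d1 hd1 h1.symm
        have e2 : col w d2 = !c := hblue w hwC d2 hd2 h2.symm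
        exact (hstep d1 w h1 e1).trans (hstep w d2 h2.symm e2)
      intro u _ v _
      obtain ⟨du, hduD, hpu⟩ := htouch u
      obtain ⟨dv, hdvD, hpv⟩ := htouch v
      exact (hpu.trans (hDconn du hduD dv hdvD)).trans
        (by haveI : Std.Symm r2 := ⟨hr2symm⟩; exact Std.Symm.symm _ _ hpv)
    · intro v _
      by_cases hv : v ∈ C
      · obtain ⟨u, _, h1, h2⟩ := hCtoD v hv
        exact ⟨u, mem_univ u, h1, h2⟩
      · obtain ⟨u, _, h1, h2⟩ := hDtoC v (by simp [hD, hv])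
        exact ⟨u, mem_univ u, h1, h2⟩
end

section
/- For every ε with 0 < ε ≤ 1/324 there exists n_0 such that for every n ≥ n_0 the following holds: if F is a 2-edge-coloured graph with |V(F)| ≤ n and at least (1−ε)·binom(n,2) edges, then there exists S ⊆ V(F) with |S| ≥ (1−3√ε)n such that the induced subgraph F[S] has minimum degree at least (1−6√ε)n and there is a colour c ∈ {red, blue} such that the subgraph of colour-c edges of F[S] is connected and every vertex of S is incident to a colour-c edge inside S. -/
open Finset

set_option linter.unusedSectionVars false
section aux
variable {V : Type} [Fintype V] [DecidableEq V] (F : SimpleGraph V) [DecidableRel F.Adj]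

lemma aux_sum : ∑ v : V, ((Fintype.card V : ℝ) - 1 - F.degree v)
    = (Fintype.card V : ℝ) * ((Fintype.card V : ℝ) - 1) - 2 * F.edgeFinset.card := by
  have h : (∑ v : V, (F.degree v : ℝ)) = 2 * F.edgeFinset.card := by
    exact_mod_cast congrArg (Nat.cast : ℕ → ℝ) F.sum_degrees_eq_twice_card_edges
  rw [Finset.sum_sub_distrib, Finset.sum_sub_distrib, h, Finset.sum_const, Finset.sum_const,
    Finset.card_univ, nsmul_eq_mul, nsmul_eq_mul, mul_one]
  ring

lemma aux_nonneg (v : V) : (0:ℝ) ≤ (Fintype.card V : ℝ) - 1 - F.degree v := by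
  have h := F.degree_lt_card_verts v
  have : (F.degree v : ℝ) + 1 ≤ Fintype.card V := by exact_mod_cast h
  linarith

lemma aux_subsum (T : Finset V) :
    ∑ v ∈ T, ((Fintype.card V : ℝ) - 1 - F.degree v)
      ≤ (Fintype.card V : ℝ) * ((Fintype.card V : ℝ) - 1) - 2 * F.edgeFinset.card := by
  rw [← aux_sum F]
  exact Finset.sum_le_sum_of_subset_of_nonneg (Finset.subset_univ T)
    (fun v _ _ => aux_nonneg F v)

/-- degree bound for vertices nonadjacent to all of `A`. -/
lemma aux_deg_nonadj (A : Finset V) (b : V) (hb : b ∉ A) (h : ∀ a ∈ A, ¬ F.Adj a b) :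
    (F.degree b : ℝ) ≤ (Fintype.card V : ℝ) - 1 - A.card := by
  have hsub : F.neighborFinset b ⊆ Finset.univ \ insert b A := by
    intro x hx
    rw [SimpleGraph.mem_neighborFinset] at hx
    simp only [Finset.mem_sdiff, Finset.mem_univ, Finset.mem_insert, true_and]
    rintro (rfl | hxA)
    · exact F.irrefl hx
    · exact h x hxA hx.symm
  have hcard := Finset.card_le_card hsub
  rw [Finset.card_sdiff_of_subset (Finset.subset_univ _), Finset.card_univ, Finset.card_insert_of_notMem hb] at hcard
  have hins : A.card + 1 ≤ Fintype.card V := by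
    have := Finset.card_le_card (Finset.subset_univ (insert b A))
    rwa [Finset.card_insert_of_notMem hb, Finset.card_univ] at this
  have : (F.degree b : ℝ) ≤ (Fintype.card V : ℝ) - (A.card + 1) := by
    rw [SimpleGraph.degree]
    have := (Nat.cast_le (α := ℝ)).2 hcard
    rwa [Nat.cast_sub hins, Nat.cast_add, Nat.cast_one] at this
  linarith

/-- count of neighbours in a subset. -/
lemma aux_inter (v : V) (P : Finset V) :
    (F.degree v : ℝ) - ((Fintype.card V : ℝ) - P.card)
      ≤ ((F.neighborFinset v ∩ P).card : ℝ) := by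
  have h1 : (F.neighborFinset v \ P).card ≤ (Finset.univ \ P).card :=
    Finset.card_le_card (Finset.sdiff_subset_sdiff (Finset.subset_univ _) le_rfl)
  have h2 : ((F.neighborFinset v ∩ P).card : ℕ) + (F.neighborFinset v \ P).card
      = F.degree v := Finset.card_inter_add_card_sdiff _ _
  have h3 : ((Finset.univ \ P).card : ℝ) = (Fintype.card V : ℝ) - P.card := by
    rw [Finset.cast_card_sdiff (Finset.subset_univ _), Finset.card_univ]
  have h1' : ((F.neighborFinset v \ P).card : ℝ) ≤ (Fintype.card V : ℝ) - P.card := by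
    rw [← h3]; exact_mod_cast h1
  have h2' : ((F.neighborFinset v ∩ P).card : ℝ) + (F.neighborFinset v \ P).card
      = F.degree v := by exact_mod_cast h2
  linarith

/-- monotone version: neighbours in `S ⊆ T`. -/
lemma aux_inter_mono (v : V) {S T : Finset V} (hST : S ⊆ T) :
    ((F.neighborFinset v ∩ T).card : ℝ) - ((T.card : ℝ) - S.card)
      ≤ ((F.neighborFinset v ∩ S).card : ℝ) := by
  have hsub : (F.neighborFinset v ∩ T) \ (F.neighborFinset v ∩ S) ⊆ T \ S := by
    intro x hx
    simp only [Finset.mem_sdiff, Finset.mem_inter] at hx ⊢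
    exact ⟨hx.1.2, fun hxS => hx.2 ⟨hx.1.1, hxS⟩⟩
  have h1 : ((F.neighborFinset v ∩ T) \ (F.neighborFinset v ∩ S)).card ≤ (T \ S).card :=
    Finset.card_le_card hsub
  have h2 : (((F.neighborFinset v ∩ T) \ (F.neighborFinset v ∩ S)).card : ℝ)
      = (F.neighborFinset v ∩ T).card - (F.neighborFinset v ∩ S).card :=
    Finset.cast_card_sdiff (Finset.inter_subset_inter le_rfl hST)
  have h3 : ((T \ S).card : ℝ) = T.card - S.card := Finset.cast_card_sdiff hST
  have h1' : (((F.neighborFinset v ∩ T) \ (F.neighborFinset v ∩ S)).card : ℝ) ≤ (T \ S).card := by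
    exact_mod_cast h1
  linarith

end aux

set_option maxHeartbeats 2000000
/-- For every `0 < ε ≤ 1/324` there is `n₀` such that for all `n ≥ n₀`: every 2-edge-coloured
graph `F` (`col` gives the colour of each edge, `true` = red) with `|V(F)| ≤ n` and at least
`(1-ε) C(n,2)` edges has a set `S ⊆ V(F)` with `|S| ≥ (1-3√ε)n` such that `F[S]` has minimum
degree at least `(1-6√ε)n` and for some colour `c` the subgraph of colour-`c` edges of `F[S]`
is connected and every vertex of `S` is incident to a colour-`c` edge inside `S`. -/
theorem stmt12 (ε : ℝ) (hε0 : 0 < ε) (hε : ε ≤ 1 / 324) :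
    ∃ n₀ : ℕ, ∀ n : ℕ, n₀ ≤ n →
      ∀ (V : Type) [Fintype V] [DecidableEq V] (F : SimpleGraph V) [DecidableRel F.Adj]
        (col : V → V → Bool), (∀ u v, col u v = col v u) →
        Fintype.card V ≤ n →
        (1 - ε) * (n.choose 2 : ℝ) ≤ (F.edgeFinset.card : ℝ) →
        ∃ (S : Finset V) (c : Bool),
          (1 - 3 * Real.sqrt ε) * n ≤ (S.card : ℝ) ∧
          (∀ v ∈ S, (1 - 6 * Real.sqrt ε) * n ≤ (((F.neighborFinset v) ∩ S).card : ℝ)) ∧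
          (∀ u ∈ S, ∀ v ∈ S,
            Relation.ReflTransGen (fun a b => a ∈ S ∧ b ∈ S ∧ F.Adj a b ∧ col a b = c) u v) ∧
          (∀ v ∈ S, ∃ u ∈ S, F.Adj v u ∧ col v u = c) := by
  classical
  set σ := Real.sqrt ε with hσdef
  have hσ0 : 0 < σ := Real.sqrt_pos.2 hε0
  have hσ18 : σ ≤ 1/18 := by
    have h1 : σ ≤ Real.sqrt (1/324) := Real.sqrt_le_sqrt hε
    have h2 : Real.sqrt (1/324) = 1/18 := by
      rw [show (1/324 : ℝ) = (1/18)^2 by norm_num, Real.sqrt_sq (by norm_num)]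
    linarith
  have hσsq : σ^2 = ε := Real.sq_sqrt hε0.le
  refine ⟨⌈(3:ℝ)/σ⌉₊, ?_⟩
  intro n hn V _ _ F _ col hcolsymm hcardV hedge
  have hσn : (3:ℝ) ≤ σ * n := by
    have h1 : ((3:ℝ)/σ) ≤ n := le_trans (Nat.le_ceil _) (by exact_mod_cast hn)
    have := mul_le_mul_of_nonneg_left h1 hσ0.le
    rwa [mul_div_cancel₀ _ hσ0.ne'] at this
  have hn0 : (0:ℝ) < n := by nlinarith
  have hn54 : (54:ℝ) ≤ n := by
    have : σ * n ≤ (1/18) * n := mul_le_mul_of_nonneg_right hσ18 hn0.le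
    linarith
  set m := Fintype.card V with hmdef
  have hm_ub : (m:ℝ) ≤ n := by exact_mod_cast hcardV
  have hedge2 : (1 - σ^2) * ((n:ℝ) * ((n:ℝ)-1)) ≤ 2 * (F.edgeFinset.card : ℝ) := by
    rw [hσsq]
    rw [Nat.cast_choose_two] at hedge
    nlinarith [hedge]
  have hm_choose : 2 * (F.edgeFinset.card : ℝ) ≤ (m:ℝ) * ((m:ℝ)-1) := by
    have h := F.card_edgeFinset_le_card_choose_two
    have h' : (F.edgeFinset.card : ℝ) ≤ (m.choose 2 : ℝ) := by exact_mod_cast h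
    rw [Nat.cast_choose_two] at h'
    linarith
  have hkey : (m:ℝ) * ((m:ℝ)-1) - 2 * (F.edgeFinset.card : ℝ) ≤ σ^2 * n^2 := by
    have hmn : (m:ℝ) * ((m:ℝ)-1) ≤ (n:ℝ) * ((n:ℝ)-1) := by nlinarith [Nat.cast_nonneg (α := ℝ) m]
    nlinarith [hedge2]
  have hm_lb : (1-σ) * n ≤ (m:ℝ) := by
    by_contra hcon
    push_neg at hcon
    have hm0 : (0:ℝ) ≤ m := Nat.cast_nonneg m
    nlinarith [hm_choose, hedge2]
  -- the set of high-degree vertices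
  set S₀ := Finset.univ.filter (fun v => (m:ℝ) - 1 - σ*n ≤ F.degree v) with hS₀def
  have hS₀mem : ∀ v, v ∈ S₀ ↔ (m:ℝ) - 1 - σ*n ≤ F.degree v := by
    intro v; simp [hS₀def]
  have hout : ((Finset.univ \ S₀).card : ℝ) ≤ σ * n := by
    have houtdeg : ∀ v ∈ Finset.univ \ S₀, σ*n ≤ (m:ℝ) - 1 - F.degree v := by
      intro v hv
      rw [Finset.mem_sdiff] at hv
      have := (not_iff_not.2 (hS₀mem v)).1 hv.2
      push_neg at this
      linarith
    have h1 := Finset.card_nsmul_le_sum (Finset.univ \ S₀) _ _ houtdeg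
    rw [nsmul_eq_mul] at h1
    have h2 := aux_subsum F (Finset.univ \ S₀)
    have h3 : ((Finset.univ \ S₀).card : ℝ) * (σ*n) ≤ σ^2 * n^2 := by
      calc ((Finset.univ \ S₀).card : ℝ) * (σ*n) ≤ _ := h1
      _ ≤ _ := h2
      _ ≤ σ^2*n^2 := hkey
    nlinarith [h3, Nat.cast_nonneg (α := ℝ) (Finset.univ \ S₀).card]
  have hS₀compl : ((S₀.card : ℝ)) = (m:ℝ) - (Finset.univ \ S₀).card := by
    have : ((Finset.univ \ S₀).card : ℝ) = (m:ℝ) - S₀.card := by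
      rw [Finset.cast_card_sdiff (Finset.subset_univ _), Finset.card_univ]
    linarith
  have hS₀card : (1-2*σ)*n ≤ (S₀.card : ℝ) := by
    rw [hS₀compl]; nlinarith [hm_lb, hout]
  have hS₀n : (S₀.card : ℝ) ≤ n := by
    have : (S₀.card : ℝ) ≤ m := by
      exact_mod_cast Finset.card_le_card (Finset.subset_univ S₀)
    linarith
  have hdegS₀ : ∀ v ∈ S₀, (1-4*σ)*n ≤ ((F.neighborFinset v ∩ S₀).card : ℝ) := by
    intro v hv
    have h1 := aux_inter F v S₀
    have h2 := (hS₀mem v).1 hv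
    have h3 : (m:ℝ) - (S₀.card:ℝ) ≤ σ * n := by rw [hS₀compl] at *; linarith
    nlinarith [hm_lb, hσn]
  -- the red step relation on S₀
  obtain ⟨step, hstepdef⟩ : ∃ step : V → V → Prop,
      ∀ a b, step a b ↔ (a ∈ S₀ ∧ b ∈ S₀ ∧ F.Adj a b ∧ col a b = true) :=
    ⟨_, fun a b => Iff.rfl⟩
  have hsymm : Symmetric step := by
    intro a b h
    rw [hstepdef] at h ⊢
    exact ⟨h.2.1, h.1, h.2.2.1.symm, (hcolsymm b a).trans h.2.2.2⟩
  have hRsymm : ∀ {a b}, Relation.ReflTransGen step a b → Relation.ReflTransGen step b a :=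
    fun h => @Std.Symm.symm _ _ (@Relation.ReflTransGen.symmetric _ _ ⟨fun _ _ h' => hsymm h'⟩) _ _ h
  obtain ⟨C, hC⟩ : ∃ C : V → Finset V, ∀ x y,
      y ∈ C x ↔ (y ∈ S₀ ∧ Relation.ReflTransGen step x y) :=
    ⟨fun x => S₀.filter (fun y => Relation.ReflTransGen step x y),
      by intro x y; simp [Finset.mem_filter]⟩
  have hCsubS₀ : ∀ x, C x ⊆ S₀ := fun x y hy => ((hC x y).1 hy).1
  have hxCx : ∀ x ∈ S₀, x ∈ C x := fun x hx => (hC x x).2 ⟨hx, Relation.ReflTransGen.refl⟩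
  have hclass_sub : ∀ (U : Finset V), (∀ a ∈ U, ∀ b, step a b → b ∈ U) →
      ∀ x ∈ U, C x ⊆ U := by
    intro U hU x hxU y hy
    obtain ⟨hyS, hr⟩ := (hC x y).1 hy
    clear hy hyS
    induction hr with
    | refl => exact hxU
    | tail h1 h2 ih => exact hU _ ih _ h2
  have hclosed_sdiff : ∀ (A B : Finset V), (∀ a ∈ A, ∀ b, step a b → b ∈ A) →
      (∀ a ∈ B, ∀ b, step a b → b ∈ B) →
      (∀ a ∈ A \ B, ∀ b, step a b → b ∈ A \ B) := by
    intro A B hA hB a ha b hst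
    rw [Finset.mem_sdiff] at ha ⊢
    exact ⟨hA a ha.1 b hst, fun hbB => ha.2 (hB b hbB a (hsymm hst))⟩
  by_cases hbig : ∃ x ∈ S₀, (S₀.card:ℝ) - σ*n ≤ ((C x).card:ℝ)
  · -- CASE A : a giant red class, use colour red
    obtain ⟨x, hxS₀, hCx⟩ := hbig
    refine ⟨C x, true, ?_, ?_, ?_, ?_⟩
    · linarith
    · intro v hv
      have h1 := aux_inter_mono F v (hCsubS₀ x)
      have h2 := hdegS₀ v (hCsubS₀ x hv)
      nlinarith [hσn]
    · -- connectivity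
      have hgsymm : Symmetric (fun a b => a ∈ C x ∧ b ∈ C x ∧ F.Adj a b ∧ col a b = true) := by
        intro a b h
        exact ⟨h.2.1, h.1, h.2.2.1.symm, (hcolsymm b a).trans h.2.2.2⟩
      have hpath : ∀ y, Relation.ReflTransGen step x y →
          Relation.ReflTransGen (fun a b => a ∈ C x ∧ b ∈ C x ∧ F.Adj a b ∧ col a b = true) x y := by
        intro y hy
        induction hy with
        | refl => exact Relation.ReflTransGen.refl
        | tail h1 h2 ih =>
          have h2' := (hstepdef _ _).1 h2
          exact ih.tail ⟨(hC x _).2 ⟨h2'.1, h1⟩, (hC x _).2 ⟨h2'.2.1, h1.tail h2⟩,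
            h2'.2.2.1, h2'.2.2.2⟩
      intro u hu v hv
      have hru := ((hC x u).1 hu).2
      have hrv := ((hC x v).1 hv).2
      exact ((@Std.Symm.symm _ _ (@Relation.ReflTransGen.symmetric _ _ ⟨fun _ _ h' => hgsymm h'⟩) _ _ (hpath u hru))).trans (hpath v hrv)
    · -- spanning
      intro v hv
      have hcard2 : 1 < (C x).card := by
      -- (C x).card ≥ (1-3σ)n ≥ (5/6)*54 ≥ 2
        have h2 : (2:ℝ) ≤ ((C x).card:ℝ) := by nlinarith [hσn, hn54, hσ18, hS₀card, hCx]
        exact_mod_cast lt_of_lt_of_le (by norm_num : (1:ℝ) < 2) h2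
      obtain ⟨w, hwC, hwv⟩ := Finset.exists_mem_ne hcard2 v
      have hrv := ((hC x v).1 hv).2
      have hrw := ((hC x w).1 hwC).2
      have hvw : Relation.ReflTransGen step v w := (hRsymm hrv).trans hrw
      rcases hvw.cases_head with heq | ⟨u, hst, _⟩
      · exact absurd heq.symm hwv
      · have hst' := (hstepdef _ _).1 hst
        exact ⟨u, (hC x u).2 ⟨hst'.2.1, hrv.tail hst⟩, hst'.2.2.1, hst'.2.2.2⟩
  · -- CASE B
    push_neg at hbig
    -- find a red-closed set A with σn ≤ |A| ≤ |S₀|/2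
    have hS₀closed : ∀ a ∈ S₀, ∀ b, step a b → b ∈ S₀ :=
      fun a _ b hb => ((hstepdef a b).1 hb).2.1
    obtain ⟨A, hAS₀, hAclosed, hAlb, hAub⟩ : ∃ A : Finset V, A ⊆ S₀ ∧
        (∀ a ∈ A, ∀ b, step a b → b ∈ A) ∧ σ*n ≤ (A.card:ℝ) ∧ (A.card:ℝ) ≤ (S₀.card:ℝ)/2 := by
      obtain ⟨U, hU, hUmin⟩ := Finset.exists_min_image
        (Finset.univ.filter (fun A : Finset V =>
          (A ⊆ S₀ ∧ ∀ a ∈ A, ∀ b, step a b → b ∈ A) ∧ σ*n ≤ (A.card:ℝ)))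
        (fun A => A.card)
        ⟨S₀, Finset.mem_filter.2 ⟨Finset.mem_univ _,
          ⟨⟨Finset.Subset.refl _, hS₀closed⟩, by nlinarith [hS₀card, hσ18, hn0]⟩⟩⟩
      rw [Finset.mem_filter] at hU
      obtain ⟨-, ⟨hUS₀, hUclosed⟩, hUcard⟩ := hU
      by_cases hUhalf : (U.card:ℝ) ≤ (S₀.card:ℝ)/2
      · exact ⟨U, hUS₀, hUclosed, hUcard, hUhalf⟩
      push_neg at hUhalf
      have hUne : U.Nonempty := by
        rw [← Finset.card_pos]
        by_contra hcon
        push_neg at hcon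
        interval_cases h : U.card
        · simp [h] at hUcard; nlinarith
      obtain ⟨x, hxU⟩ := hUne
      have hxS₀ := hUS₀ hxU
      by_cases hUCx : U ⊆ C x
      · refine ⟨S₀ \ U, Finset.sdiff_subset, hclosed_sdiff S₀ U hS₀closed hUclosed, ?_, ?_⟩
        · have h1 : (U.card:ℝ) ≤ (C x).card := by exact_mod_cast Finset.card_le_card hUCx
          have h2 := hbig x hxS₀
          rw [Finset.cast_card_sdiff hUS₀]
          linarith
        · rw [Finset.cast_card_sdiff hUS₀]
          linarith
      · exfalso
        obtain ⟨y, hyU, hyCx⟩ := Finset.not_subset.1 hUCx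
        have hmin' : ∀ w ∈ U, (U.card:ℝ) - ((C w).card:ℝ) < σ*n := by
          intro w hwU
          by_contra hcon
          push_neg at hcon
          have hsub := hclass_sub U hUclosed w hwU
          have hcast : ((U \ C w).card:ℝ) = (U.card:ℝ) - (C w).card :=
            Finset.cast_card_sdiff hsub
          have hmem : U \ C w ∈ Finset.univ.filter (fun A : Finset V =>
              (A ⊆ S₀ ∧ ∀ a ∈ A, ∀ b, step a b → b ∈ A) ∧ σ*n ≤ (A.card:ℝ)) :=
            Finset.mem_filter.2 ⟨Finset.mem_univ _,
              ⟨⟨Finset.sdiff_subset.trans hUS₀,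
                hclosed_sdiff U (C w) hUclosed (fun a ha b hb =>
                  (hC w b).2 ⟨((hstepdef a b).1 hb).2.1, ((hC w a).1 ha).2.tail hb⟩)⟩,
                by rw [hcast]; exact hcon⟩⟩
          have hle := hUmin _ hmem
          have hwCw : w ∈ C w := hxCx w (hUS₀ hwU)
          have hlt : (U \ C w).card < U.card := by
            have h1 : (C w).card ≤ U.card := Finset.card_le_card hsub
            have h2 : 0 < (C w).card := Finset.card_pos.2 ⟨w, hwCw⟩
            rw [Finset.card_sdiff_of_subset hsub]
            omega
          omega
        have hx' := hmin' x hxU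
        have hy' := hmin' y hyU
        have hdisj : Disjoint (C x) (C y) := by
          rw [Finset.disjoint_left]
          intro z hzx hzy
          exact hyCx ((hC x y).2 ⟨hUS₀ hyU,
            (((hC x z).1 hzx).2).trans (hRsymm ((hC y z).1 hzy).2)⟩)
        have hsum : ((C x).card:ℝ) + ((C y).card:ℝ) ≤ (U.card:ℝ) := by
          have h1 : ((C x) ∪ (C y)).card = (C x).card + (C y).card :=
            Finset.card_union_of_disjoint hdisj
          have h2 : ((C x) ∪ (C y)).card ≤ U.card :=
            Finset.card_le_card (Finset.union_subset (hclass_sub U hUclosed x hxU)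
              (hclass_sub U hUclosed y hyU))
          exact_mod_cast h1 ▸ h2
        -- U.card < 2σn but U.card > S₀.card/2 ≥ (1-2σ)n/2 ≥ 2σn
        nlinarith [hS₀card, hσ18, hn0, hn54]
    -- B' : vertices outside A with a neighbour in A ; T : the rest ; S := A ∪ B'
    set B' := (S₀ \ A).filter (fun b => ∃ a ∈ A, F.Adj a b) with hB'def
    set T := (S₀ \ A) \ B' with hTdef
    have hB'mem : ∀ b, b ∈ B' ↔ (b ∈ S₀ ∧ b ∉ A ∧ ∃ a ∈ A, F.Adj a b) := by
      intro b
      simp only [hB'def, Finset.mem_filter, Finset.mem_sdiff]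
      tauto
    have hTprop : ∀ b ∈ T, b ∈ S₀ ∧ b ∉ A ∧ ∀ a ∈ A, ¬ F.Adj a b := by
      intro b hb
      rw [hTdef, Finset.mem_sdiff, Finset.mem_sdiff] at hb
      refine ⟨hb.1.1, hb.1.2, fun a ha hadj => hb.2 ((hB'mem b).2 ⟨hb.1.1, hb.1.2, a, ha, hadj⟩)⟩
    have hTcard : ((T.card):ℝ) ≤ σ * n := by
      have hstep1 : ∀ b ∈ T, (A.card:ℝ) ≤ (m:ℝ) - 1 - F.degree b := by
        intro b hb
        obtain ⟨_, hbA, hnadj⟩ := hTprop b hb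
        have := aux_deg_nonadj F A b hbA hnadj
        linarith
      have h1 := Finset.card_nsmul_le_sum T _ _ hstep1
      rw [nsmul_eq_mul] at h1
      have h2 := aux_subsum F T
      have h3 : ((T.card):ℝ) * (A.card:ℝ) ≤ σ^2*n^2 := by
        calc ((T.card):ℝ) * (A.card:ℝ) ≤ _ := h1
        _ ≤ _ := h2
        _ ≤ σ^2*n^2 := hkey
      nlinarith [h3, hAlb, Nat.cast_nonneg (α := ℝ) T.card, hσn]
    have hB'sub : B' ⊆ S₀ \ A := Finset.filter_subset _ _
    have hABdisj : Disjoint A B' := by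
      rw [Finset.disjoint_right]
      intro b hb
      exact ((hB'mem b).1 hb).2.1
    have hSsub : A ∪ B' ⊆ S₀ :=
      Finset.union_subset hAS₀ (hB'sub.trans Finset.sdiff_subset)
    have hScard : ((A ∪ B').card : ℝ) = (S₀.card:ℝ) - T.card := by
      have e1 : ((A ∪ B').card : ℝ) = (A.card:ℝ) + B'.card := by
        exact_mod_cast Finset.card_union_of_disjoint hABdisj
      have e2 : ((T.card):ℝ) = ((S₀ \ A).card:ℝ) - B'.card := by
        rw [hTdef]; exact Finset.cast_card_sdiff hB'sub
      have e3 : (((S₀ \ A)).card:ℝ) = (S₀.card:ℝ) - A.card := Finset.cast_card_sdiff hAS₀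
      linarith
    have hSlb : (1 - 3*σ)*n ≤ ((A ∪ B').card : ℝ) := by
      rw [hScard]; linarith [hS₀card, hTcard]
    -- degrees inside S
    have hdegS : ∀ v ∈ A ∪ B', (1-6*σ)*n ≤ ((F.neighborFinset v ∩ (A ∪ B')).card : ℝ) := by
      intro v hv
      have h1 := aux_inter_mono F v hSsub
      have h2 := hdegS₀ v (hSsub hv)
      have h3 : (S₀.card:ℝ) - (A ∪ B').card ≤ σ*n := by rw [hScard]; linarith
      nlinarith [hσn]
    -- all edges from A leaving A are blue
    have hcross : ∀ a ∈ A, ∀ b, b ∈ S₀ → b ∉ A → F.Adj a b → col a b = false := by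
      intro a ha b hbS₀ hbA hadj
      cases hcol : col a b with
      | false => rfl
      | true => exact absurd (hAclosed a ha b ((hstepdef a b).2 ⟨hAS₀ ha, hbS₀, hadj, hcol⟩)) hbA
    -- every vertex of A has many neighbours outside A
    have hNB : ∀ a ∈ A, (1-4*σ)*n - (A.card:ℝ) ≤ ((F.neighborFinset a ∩ (S₀ \ A)).card : ℝ) := by
      intro a ha
      have hsplit : (F.neighborFinset a ∩ S₀) ⊆
          (F.neighborFinset a ∩ A) ∪ (F.neighborFinset a ∩ (S₀ \ A)) := by
        intro z hz
        rw [Finset.mem_inter] at hz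
        by_cases hzA : z ∈ A
        · exact Finset.mem_union_left _ (Finset.mem_inter.2 ⟨hz.1, hzA⟩)
        · exact Finset.mem_union_right _
            (Finset.mem_inter.2 ⟨hz.1, Finset.mem_sdiff.2 ⟨hz.2, hzA⟩⟩)
      have h1 := (Finset.card_le_card hsplit).trans (Finset.card_union_le _ _)
      have h2 : (F.neighborFinset a ∩ A).card ≤ A.card :=
        Finset.card_le_card Finset.inter_subset_right
      have h3 := hdegS₀ a (hAS₀ ha)
      have h1' : ((F.neighborFinset a ∩ S₀).card:ℝ) ≤
          ((F.neighborFinset a ∩ A).card:ℝ) + ((F.neighborFinset a ∩ (S₀ \ A)).card:ℝ) := by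
        exact_mod_cast h1
      have h2' : ((F.neighborFinset a ∩ A).card:ℝ) ≤ (A.card:ℝ) := by exact_mod_cast h2
      linarith
    have h_aB' : ∀ a ∈ A, ∃ b ∈ B', F.Adj a b := by
      intro a ha
      have h1 := hNB a ha
      have hpos : (0:ℝ) < ((F.neighborFinset a ∩ (S₀ \ A)).card : ℝ) := by
        nlinarith [hAub, hS₀n, hσ18, hn54]
      have : 0 < (F.neighborFinset a ∩ (S₀ \ A)).card := by exact_mod_cast hpos
      obtain ⟨b, hb⟩ := Finset.card_pos.1 this
      rw [Finset.mem_inter, SimpleGraph.mem_neighborFinset, Finset.mem_sdiff] at hb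
      exact ⟨b, (hB'mem b).2 ⟨hb.2.1, hb.2.2, a, ha, hb.1⟩, hb.1⟩
    have h_common : ∀ a ∈ A, ∀ a' ∈ A, ∃ b, b ∈ B' ∧ F.Adj a b ∧ F.Adj a' b := by
      intro a ha a' ha'
      have h1 := hNB a ha
      have h2 := hNB a' ha'
      have hXY : (F.neighborFinset a ∩ (S₀ \ A)) ∪ (F.neighborFinset a' ∩ (S₀ \ A)) ⊆ S₀ \ A :=
        Finset.union_subset Finset.inter_subset_right Finset.inter_subset_right
      have h3 : (((F.neighborFinset a ∩ (S₀ \ A)) ∪ (F.neighborFinset a' ∩ (S₀ \ A))).card : ℝ)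
          ≤ (S₀.card:ℝ) - A.card := by
        rw [← Finset.cast_card_sdiff hAS₀]
        exact_mod_cast Finset.card_le_card hXY
      have h4 : ((F.neighborFinset a ∩ (S₀ \ A)) ∪ (F.neighborFinset a' ∩ (S₀ \ A))).card
          + ((F.neighborFinset a ∩ (S₀ \ A)) ∩ (F.neighborFinset a' ∩ (S₀ \ A))).card
          = (F.neighborFinset a ∩ (S₀ \ A)).card + (F.neighborFinset a' ∩ (S₀ \ A)).card :=
        Finset.card_union_add_card_inter _ _
      have h4' : (((F.neighborFinset a ∩ (S₀ \ A)) ∪ (F.neighborFinset a' ∩ (S₀ \ A))).card:ℝ)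
          + (((F.neighborFinset a ∩ (S₀ \ A)) ∩ (F.neighborFinset a' ∩ (S₀ \ A))).card:ℝ)
          = ((F.neighborFinset a ∩ (S₀ \ A)).card:ℝ)
            + ((F.neighborFinset a' ∩ (S₀ \ A)).card:ℝ) := by exact_mod_cast h4
      have hpos : (0:ℝ) <
          (((F.neighborFinset a ∩ (S₀ \ A)) ∩ (F.neighborFinset a' ∩ (S₀ \ A))).card:ℝ) := by
        nlinarith [hAub, hS₀n, hσ18, hn54]
      have : 0 < ((F.neighborFinset a ∩ (S₀ \ A)) ∩ (F.neighborFinset a' ∩ (S₀ \ A))).card := by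
        exact_mod_cast hpos
      obtain ⟨b, hb⟩ := Finset.card_pos.1 this
      rw [Finset.mem_inter, Finset.mem_inter, Finset.mem_inter,
        SimpleGraph.mem_neighborFinset, SimpleGraph.mem_neighborFinset, Finset.mem_sdiff] at hb
      exact ⟨b, (hB'mem b).2 ⟨hb.1.2.1, hb.1.2.2, a, ha, hb.1.1⟩, hb.1.1, hb.2.1⟩
    -- assemble, colour blue
    refine ⟨A ∪ B', false, hSlb, hdegS, ?_, ?_⟩
    · -- connectivity
      have hgsymm : Symmetric (fun a b =>
          a ∈ A ∪ B' ∧ b ∈ A ∪ B' ∧ F.Adj a b ∧ col a b = false) := by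
        intro a b h
        exact ⟨h.2.1, h.1, h.2.2.1.symm, (hcolsymm b a).trans h.2.2.2⟩
      have htoA : ∀ v ∈ A ∪ B', ∃ a ∈ A, Relation.ReflTransGen
          (fun a b => a ∈ A ∪ B' ∧ b ∈ A ∪ B' ∧ F.Adj a b ∧ col a b = false) v a := by
        intro v hv
        rcases Finset.mem_union.1 hv with hvA | hvB'
        · exact ⟨v, hvA, Relation.ReflTransGen.refl⟩
        · obtain ⟨hvS₀, hvA, a, haA, hadj⟩ := (hB'mem v).1 hvB'
          refine ⟨a, haA, Relation.ReflTransGen.single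
            ⟨hv, Finset.mem_union_left _ haA, hadj.symm, ?_⟩⟩
          exact (hcolsymm v a).trans (hcross a haA v hvS₀ hvA hadj)
      have hAA : ∀ a ∈ A, ∀ a' ∈ A, Relation.ReflTransGen
          (fun a b => a ∈ A ∪ B' ∧ b ∈ A ∪ B' ∧ F.Adj a b ∧ col a b = false) a a' := by
        intro a ha a' ha'
        obtain ⟨b, hbB', hab, ha'b⟩ := h_common a ha a' ha'
        obtain ⟨hbS₀, hbA, -⟩ := (hB'mem b).1 hbB'
        refine (Relation.ReflTransGen.single ⟨Finset.mem_union_left _ ha,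
          Finset.mem_union_right _ hbB', hab, hcross a ha b hbS₀ hbA hab⟩).tail
          ⟨Finset.mem_union_right _ hbB', Finset.mem_union_left _ ha', ha'b.symm,
            (hcolsymm b a').trans (hcross a' ha' b hbS₀ hbA ha'b)⟩
      intro u hu v hv
      obtain ⟨a, ha, hua⟩ := htoA u hu
      obtain ⟨a', ha', hva⟩ := htoA v hv
      exact hua.trans ((hAA a ha a' ha').trans ((@Std.Symm.symm _ _ (@Relation.ReflTransGen.symmetric _ _ ⟨fun _ _ h' => hgsymm h'⟩) _ _ hva)))
    · -- spanning
      intro v hv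
      rcases Finset.mem_union.1 hv with hvA | hvB'
      · obtain ⟨b, hbB', hadj⟩ := h_aB' v hvA
        obtain ⟨hbS₀, hbA, -⟩ := (hB'mem b).1 hbB'
        exact ⟨b, Finset.mem_union_right _ hbB', hadj, hcross v hvA b hbS₀ hbA hadj⟩
      · obtain ⟨hvS₀, hvA, a, haA, hadj⟩ := (hB'mem v).1 hvB'
        exact ⟨a, Finset.mem_union_left _ haA, hadj.symm,
          (hcolsymm v a).trans (hcross a haA v hvS₀ hvA hadj)⟩
end

section
/- Let k ≥ 3. There exists ε_1 > 0 such that for every 0 < ε ≤ ε_1 there exists n_0 such that for all n ≥ n_0 and every δ > 5√ε the following holds. Let H be a 2-edge-coloured k-graph on n vertices and let G be a 3√ε-blueprint for H. Let T be a (k−3)-element subset of V(H), and let S^blue ⊆ N_G^blue(T) and S^red ⊆ N_G^red(T) be sets with |S^blue| ≥ δn and |S^red| ≥ δn. Then there exists a vertex y ∈ S^blue such that the set Γ^red_y = {x ∈ S^red : T∪{x,y} ∈ ∂R(T∪{x}) ∩ ∂B(T∪{y})} has size at least (δ − 6√ε)n. Moreover, if δ ≥ ε^{1/9}, then |Γ^red_y|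 ≥ (1 − ε^{1/4})·|S^red|. -/
open Finset

lemma deg_singleton {V : Type*} [Fintype V] [DecidableEq V] (m : ℕ)
    (S : Finset (Finset V)) (e : Finset V) (h : m - e.card = 1) :
    degT m S e = (Finset.univ.filter (fun y => insert y e ∈ S)).card := by
  unfold degT degOn
  rw [h]
  symm
  apply Finset.card_bij (fun y _ => ({y} : Finset V))
  · intro y hy
    simp only [mem_filter, mem_univ, true_and] at hy
    simp [Finset.mem_filter, Finset.mem_powersetCard, ← Finset.insert_eq, hy]
  · intro a ha b hb hab
    simpa using hab
  · intro f hf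
    simp only [mem_filter, Finset.mem_powersetCard] at hf
    obtain ⟨⟨-, hcard⟩, hfS⟩ := hf
    obtain ⟨a, rfl⟩ := Finset.card_eq_one.mp hcard
    exact ⟨a, by simp [← Finset.insert_eq] at hfS ⊢; exact hfS, rfl⟩

lemma sum_filter_swap {α β : Type*} (A : Finset α) (B : Finset β)
    (P : α → β → Prop) [∀ x y, Decidable (P x y)] :
    ∑ y ∈ B, (A.filter (fun x => P x y)).card = ∑ x ∈ A, (B.filter (fun y => P x y)).card := by
  simp only [Finset.card_filter]
  exact Finset.sum_comm

lemma neg_bound_aux {V : Type*} [Fintype V] [DecidableEq V] (c : ℝ) (P : V → Prop)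
    [DecidablePred P]
    (h : (1 - c) * (Fintype.card V : ℝ) ≤ ((Finset.univ.filter P).card : ℝ))
    (S' : Finset V) :
    ((S'.filter (fun z => ¬ P z)).card : ℝ) ≤ c * (Fintype.card V : ℝ) := by
  have h1 : (S'.filter (fun z => ¬ P z)).card ≤ ((Finset.univ.filter (fun z => ¬ P z)).card) :=
    Finset.card_le_card (Finset.filter_subset_filter _ (Finset.subset_univ _))
  have h2 : (Finset.univ.filter P).card + (Finset.univ.filter (fun z => ¬ P z)).card
      = Fintype.card V := by
    rw [Finset.card_filter_add_card_filter_not, Finset.card_univ]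
  have h1' : ((S'.filter (fun z => ¬ P z)).card : ℝ)
      ≤ ((Finset.univ.filter (fun z => ¬ P z)).card : ℝ) := by exact_mod_cast h1
  have h2' : ((Finset.univ.filter P).card : ℝ)
      + ((Finset.univ.filter (fun z => ¬ P z)).card : ℝ) = (Fintype.card V : ℝ) := by
    exact_mod_cast h2
  nlinarith

lemma main_aux {V : Type*} [Fintype V] [DecidableEq V]
    (A B : V → V → Prop) [∀ x y, Decidable (A x y)] [∀ x y, Decidable (B x y)]
    (Sblue Sred : Finset V) (s δ : ℝ) (hs : 0 < s) (hδ : 5 * s < δ)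
    (hN : 0 < (Fintype.card V : ℝ))
    (hB : δ * (Fintype.card V : ℝ) ≤ (Sblue.card : ℝ))
    (hR : δ * (Fintype.card V : ℝ) ≤ (Sred.card : ℝ))
    (keyA : ∀ x ∈ Sred, (1 - 3*s) * (Fintype.card V : ℝ)
      ≤ ((Finset.univ.filter (fun y => A x y)).card : ℝ))
    (keyB : ∀ y ∈ Sblue, (1 - 3*s) * (Fintype.card V : ℝ)
      ≤ ((Finset.univ.filter (fun x => B x y)).card : ℝ)) :
    ∃ y ∈ Sblue,
      (δ - 6*s) * (Fintype.card V : ℝ) ≤ ((Sred.filter (fun x => A x y ∧ B x y)).card : ℝ) ∧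
      ∀ t : ℝ, 0 ≤ t → 6*s ≤ δ * t →
        (1 - t) * (Sred.card : ℝ) ≤ ((Sred.filter (fun x => A x y ∧ B x y)).card : ℝ) := by
  have hδ0 : 0 < δ := lt_trans (by positivity) hδ
  have hB0 : (0:ℝ) < Sblue.card := lt_of_lt_of_le (by positivity) hB
  have hSbne : Sblue.Nonempty := Finset.card_pos.mp (by exact_mod_cast hB0)
  have hRn : (Sred.card : ℝ) ≤ (Fintype.card V : ℝ) := by
    exact_mod_cast Finset.card_le_univ Sred
  obtain ⟨y, hy, hymin⟩ := Finset.exists_min_image Sblue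
    (fun y => (Sred.filter (fun x => ¬ A x y)).card) hSbne
  set N : ℝ := (Fintype.card V : ℝ) with hN_def
  set R : ℝ := (Sred.card : ℝ) with hR_def
  set badA : ℝ := ((Sred.filter (fun x => ¬ A x y)).card : ℝ) with hbadA_def
  set badB : ℝ := ((Sred.filter (fun x => ¬ B x y)).card : ℝ) with hbadB_def
  have hbadA0 : 0 ≤ badA := Nat.cast_nonneg _
  have hbadB0 : 0 ≤ badB := Nat.cast_nonneg _
  have hbadB : badB ≤ 3*s*N := neg_bound_aux (3*s) (fun x => B x y) (keyB y hy) Sred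
  -- sum bound for badA
  have hsum : (Sblue.card : ℝ) * badA ≤ R * (3*s*N) := by
    have h1 : Sblue.card • (Sred.filter (fun x => ¬ A x y)).card
        ≤ ∑ y' ∈ Sblue, (Sred.filter (fun x => ¬ A x y')).card :=
      Finset.card_nsmul_le_sum _ _ _ hymin
    have h2 : ∑ y' ∈ Sblue, (Sred.filter (fun x => ¬ A x y')).card
        = ∑ x ∈ Sred, (Sblue.filter (fun y' => ¬ A x y')).card :=
      sum_filter_swap _ _ _
    rw [h2] at h1
    have h3 : ((∑ x ∈ Sred, (Sblue.filter (fun y' => ¬ A x y')).card : ℕ) : ℝ)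
        ≤ R * (3*s*N) := by
      push_cast
      calc ∑ x ∈ Sred, ((Sblue.filter (fun y' => ¬ A x y')).card : ℝ)
          ≤ ∑ _x ∈ Sred, 3*s*N := by
            apply Finset.sum_le_sum
            intro x hx
            exact neg_bound_aux (3*s) (fun y' => A x y') (keyA x hx) Sblue
        _ = R * (3*s*N) := by rw [Finset.sum_const, nsmul_eq_mul, hR_def]
    refine le_trans ?_ h3
    calc (Sblue.card : ℝ) * badA
        = ((Sblue.card * (Sred.filter (fun x => ¬ A x y)).card : ℕ) : ℝ) := by
          rw [hbadA_def]; push_cast; ring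
      _ ≤ _ := by exact_mod_cast (by simpa [smul_eq_mul] using h1)
  -- split Sred
  have hsplit : R ≤ ((Sred.filter (fun x => A x y ∧ B x y)).card : ℝ) + badA + badB := by
    have e1 : (Sred.filter (fun x => A x y ∧ B x y)).card
        + (Sred.filter (fun x => ¬ (A x y ∧ B x y))).card = Sred.card :=
      Finset.card_filter_add_card_filter_not _
    have hsub : (Sred.filter (fun x => ¬ (A x y ∧ B x y)))
        ⊆ (Sred.filter (fun x => ¬ A x y)) ∪ (Sred.filter (fun x => ¬ B x y)) := by
      intro z hz
      simp only [Finset.mem_filter, Finset.mem_union, not_and_or] at hz ⊢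
      tauto
    have h4 := le_trans (Finset.card_le_card hsub) (Finset.card_union_le _ _)
    have e2 : Sred.card ≤ (Sred.filter (fun x => A x y ∧ B x y)).card
        + (Sred.filter (fun x => ¬ A x y)).card + (Sred.filter (fun x => ¬ B x y)).card := by
      omega
    rw [hR_def, hbadA_def, hbadB_def]
    exact_mod_cast e2
  set Γ : ℝ := ((Sred.filter (fun x => A x y ∧ B x y)).card : ℝ) with hΓ_def
  have hδNbadA : δ * N * badA ≤ 3*s*N*R := by
    nlinarith [mul_nonneg hbadA0 (sub_nonneg.mpr hB)]
  have hδbadA : δ * badA ≤ 3*s*R := by nlinarith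
  have hδbadB : δ * badB ≤ 3*s*R := by
    have e1 : δ * badB ≤ δ * (3*s*N) := mul_le_mul_of_nonneg_left hbadB hδ0.le
    have e2 : (3*s) * (δ*N) ≤ (3*s) * R := mul_le_mul_of_nonneg_left hR (by positivity)
    nlinarith
  have hR0 : (0:ℝ) ≤ R := Nat.cast_nonneg _
  clear hymin keyA keyB hsum hδNbadA hSbne hB hB0
  clear_value N R badA badB Γ
  have hδsplit : δ * R ≤ δ * (Γ + badA + badB) := mul_le_mul_of_nonneg_left hsplit hδ0.le
  refine ⟨y, hy, ?_, ?_⟩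
  · rw [← hΓ_def]
    have h3s : 0 ≤ δ - 3*s := by nlinarith
    have hmul : 0 ≤ (δ - 3*s) * (R - δ*N) := mul_nonneg h3s (by linarith)
    have hδbadB' : δ * badB ≤ δ * (3*s*N) := mul_le_mul_of_nonneg_left hbadB hδ0.le
    have hfin : δ * ((δ - 6*s) * N) ≤ δ * Γ := by nlinarith [hδsplit, hδbadA, hδbadB', hmul]
    exact (mul_le_mul_iff_right₀ hδ0).mp hfin
  · intro t ht h6t
    rw [← hΓ_def]
    have h6 : 6*s*R ≤ δ*t*R := by
      have := mul_le_mul_of_nonneg_right h6t hR0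
      linarith
    have hfin : δ * ((1 - t) * R) ≤ δ * Γ := by nlinarith [hδsplit, hδbadA, hδbadB, h6]
    exact (mul_le_mul_iff_right₀ hδ0).mp hfin
set_option maxHeartbeats 2000000 in
/-- Lemma 5.5 of the paper: for `k ≥ 3`, suitable small `ε > 0`, large `n` and any
`δ > 5√ε`, if `H` is a 2-edge-coloured `k`-graph on `n` vertices, `G` is a `3√ε`-blueprint
for `H`, `T` is a `(k-3)`-set of vertices, and `Sblue ⊆ N_G^blue(T)`, `Sred ⊆ N_G^red(T)`
have size at least `δn`, then there is `y ∈ Sblue` such that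
`Γ = {x ∈ Sred : T ∪ {x,y} ∈ ∂R(T∪{x}) ∩ ∂B(T∪{y})}` has size at least `(δ - 6√ε)n`;
moreover if `δ ≥ ε^{1/9}` then `|Γ| ≥ (1 - ε^{1/4})|Sred|`. -/
theorem stmt14 (k : ℕ) (hk : 3 ≤ k) :
    ∃ ε₁ : ℝ, 0 < ε₁ ∧ ∀ ε : ℝ, 0 < ε → ε ≤ ε₁ →
      ∃ n₀ : ℕ, ∀ n : ℕ, n₀ ≤ n → ∀ δ : ℝ, 5 * Real.sqrt ε < δ →
        ∀ (H : Finset (Finset (Fin n))) (cH : Finset (Fin n) → Bool),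
          (∀ e ∈ H, e.card = k) →
          ∀ G : Blueprint k H cH (3 * Real.sqrt ε),
            ∀ T : Finset (Fin n), T.card = k - 3 →
              ∀ Sblue Sred : Finset (Fin n),
                (∀ x ∈ Sblue, x ∉ T ∧ insert x T ∈ G.edges ∧ G.col (insert x T) = false) →
                (∀ x ∈ Sred, x ∉ T ∧ insert x T ∈ G.edges ∧ G.col (insert x T) = true) →
                δ * n ≤ (Sblue.card : ℝ) → δ * n ≤ (Sred.card : ℝ) →
                ∃ y ∈ Sblue,
                  (δ - 6 * Real.sqrt ε) * n ≤
                    ((Sred.filter (fun x =>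
                      insert x (insert y T) ∈ shadowTo (k - 1) (G.comp (insert x T)) ∧
                      insert x (insert y T) ∈ shadowTo (k - 1) (G.comp (insert y T)))).card : ℝ) ∧
                  (ε ^ ((1 : ℝ) / 9) ≤ δ →
                    (1 - ε ^ ((1 : ℝ) / 4)) * (Sred.card : ℝ) ≤
                      ((Sred.filter (fun x =>
                        insert x (insert y T) ∈ shadowTo (k - 1) (G.comp (insert x T)) ∧
                        insert x (insert y T) ∈ shadowTo (k - 1) (G.comp (insert y T)))).card : ℝ)) := by
  refine ⟨(6:ℝ) ^ (-(36:ℝ)), Real.rpow_pos_of_pos (by norm_num) _, ?_⟩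
  intro ε hε hε₁
  refine ⟨1, ?_⟩
  intro n hn δ hδ H cH hHcard G T hT Sblue Sred hSb hSr hBcard hRcard
  have hs : 0 < Real.sqrt ε := Real.sqrt_pos.mpr hε
  have hδ0 : 0 < δ := lt_trans (by positivity) hδ
  have hn0 : (0:ℝ) < n := by exact_mod_cast hn
  have hNn : (Fintype.card (Fin n) : ℝ) = (n : ℝ) := by simp
  -- per-x bound on condition A
  have keyA : ∀ x ∈ Sred, (1 - 3*Real.sqrt ε) * (Fintype.card (Fin n) : ℝ) ≤
      ((Finset.univ.filter (fun y => insert x (insert y T) ∈ shadowTo (k-1) (G.comp (insert x T)))).card : ℝ) := by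
    intro x hx
    obtain ⟨hxT, hxe, -⟩ := hSr x hx
    have hdeg := G.comp_deg (insert x T) hxe
    rw [deg_singleton (k-1) _ _ (by rw [Finset.card_insert_of_notMem hxT, hT]; omega)] at hdeg
    have hfe : (Finset.univ.filter (fun y => insert y (insert x T) ∈ shadowTo (k-1) (G.comp (insert x T))))
        = (Finset.univ.filter (fun y => insert x (insert y T) ∈ shadowTo (k-1) (G.comp (insert x T)))) := by
      apply Finset.filter_congr
      intro y _
      rw [Finset.insert_comm]
    rw [hfe] at hdeg
    calc (1 - 3*Real.sqrt ε) * (Fintype.card (Fin n) : ℝ)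
        = (1 - 3*Real.sqrt ε) * (n : ℝ) := by rw [hNn]
      _ ≤ _ := by simpa using hdeg
  -- per-y bound on condition B
  have keyB : ∀ y ∈ Sblue, (1 - 3*Real.sqrt ε) * (Fintype.card (Fin n) : ℝ) ≤
      ((Finset.univ.filter (fun x => insert x (insert y T) ∈ shadowTo (k-1) (G.comp (insert y T)))).card : ℝ) := by
    intro y hy
    obtain ⟨hyT, hye, -⟩ := hSb y hy
    have hdeg := G.comp_deg (insert y T) hye
    rw [deg_singleton (k-1) _ _ (by rw [Finset.card_insert_of_notMem hyT, hT]; omega)] at hdeg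
    calc (1 - 3*Real.sqrt ε) * (Fintype.card (Fin n) : ℝ)
        = (1 - 3*Real.sqrt ε) * (n : ℝ) := by rw [hNn]
      _ ≤ _ := by simpa using hdeg
  obtain ⟨y, hy, h1, h2⟩ := main_aux
    (fun x y => insert x (insert y T) ∈ shadowTo (k-1) (G.comp (insert x T)))
    (fun x y => insert x (insert y T) ∈ shadowTo (k-1) (G.comp (insert y T)))
    Sblue Sred (Real.sqrt ε) δ hs hδ (by rw [hNn]; exact hn0)
    (by rw [hNn]; exact hBcard) (by rw [hNn]; exact hRcard) keyA keyB
  rw [hNn] at h1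
  refine ⟨y, hy, h1, ?_⟩
  intro hδε
  have hε14 : (0:ℝ) ≤ ε ^ ((1:ℝ)/4) := (Real.rpow_pos_of_pos hε _).le
  have hε19 : (0:ℝ) < ε ^ ((1:ℝ)/9) := Real.rpow_pos_of_pos hε _
  have hkey : 6 * Real.sqrt ε ≤ δ * ε ^ ((1:ℝ)/4) := by
    have h536 : ε ^ ((5:ℝ)/36) ≤ 1/6 := by
      have hmono : ε ^ ((5:ℝ)/36) ≤ ((6:ℝ) ^ (-(36:ℝ))) ^ ((5:ℝ)/36) :=
        Real.rpow_le_rpow hε.le hε₁ (by norm_num)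
      have heq : ((6:ℝ) ^ (-(36:ℝ))) ^ ((5:ℝ)/36) = (6:ℝ) ^ (-(5:ℝ)) := by
        rw [← Real.rpow_mul (by norm_num)]
        norm_num
      have hle : (6:ℝ) ^ (-(5:ℝ)) ≤ (6:ℝ) ^ (-(1:ℝ)) :=
        Real.rpow_le_rpow_of_exponent_le (by norm_num) (by norm_num)
      have h61 : (6:ℝ) ^ (-(1:ℝ)) = 1/6 := by
        rw [Real.rpow_neg_one]; norm_num
      calc ε ^ ((5:ℝ)/36) ≤ (6:ℝ) ^ (-(5:ℝ)) := heq ▸ hmono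
        _ ≤ 1/6 := h61 ▸ hle
    have hsplit12 : ε ^ ((1:ℝ)/2) = ε ^ ((5:ℝ)/36) * ε ^ ((1:ℝ)/4) * ε ^ ((1:ℝ)/9) := by
      rw [← Real.rpow_add hε, ← Real.rpow_add hε]
      norm_num
    have hseq : Real.sqrt ε = ε ^ ((1:ℝ)/2) := by
      rw [Real.sqrt_eq_rpow]
    calc 6 * Real.sqrt ε = 6 * ε ^ ((5:ℝ)/36) * ε ^ ((1:ℝ)/4) * ε ^ ((1:ℝ)/9) := by
          rw [hseq, hsplit12]; ring
      _ ≤ 1 * ε ^ ((1:ℝ)/4) * ε ^ ((1:ℝ)/9) := by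
          apply mul_le_mul_of_nonneg_right _ hε19.le
          apply mul_le_mul_of_nonneg_right _ hε14
          linarith
      _ ≤ δ * ε ^ ((1:ℝ)/4) := by
          rw [one_mul, mul_comm (ε ^ ((1:ℝ)/4))]
          exact mul_le_mul_of_nonneg_right hδε hε14
  exact h2 (ε ^ ((1:ℝ)/4)) hε14 hkey
end
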